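/- arXiv:1806.02560 — 4 statements merged into one kernel-verified Lean document; each statement's English description precedes it below -/
import Mathlib

section
/- Let p be a prime and a a positive integer, and set b = p^a. Then the sequence (ℓ_b(n!))_{n∈ℕ} of last nonzero digits of n! in base b is b-automatic. -/
/-- The state reached after feeding the base-`k` digits of `n`
(most significant digit first, empty string for `n = 0`) into the
transition function `ρ` starting from state `q₀`. -/
def autoRun {Q : Type} (k : ℕ) (ρ : Q → Fin k → Q) (q₀ : Q) (n : ℕ) : Q :=
  (Nat.digits k n).reverse.foldl (fun q d => if h : d < k then ρ q ⟨d, h⟩ else q) q₀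

/-- A sequence `a : ℕ → Δ` is `k`-automatic: some DFAO over the alphabet
`{0, …, k-1}` computes `a n` from the base-`k` digits of `n`
(most significant digit first). -/
def IsAutomatic {Δ : Type*} (k : ℕ) (a : ℕ → Δ) : Prop :=
  ∃ (Q : Type) (_ : Finite Q) (ρ : Q → Fin k → Q) (q₀ : Q) (τ : Q → Δ),
    ∀ n : ℕ, a n = τ (autoRun k ρ q₀ n)

/-- `lnz b n` is the last nonzero digit of `n` in base `b`:
`(n / b ^ v_b(n)) % b`, where `v_b(n) = padicValNat b n` is the largest `t`
with `b ^ t ∣ n`. -/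
def lnz (b n : ℕ) : ℕ := (n / b ^ padicValNat b n) % b

/-- `digSum b n` is the sum of the digits of `n` written in base `b`. -/
def digSum (b n : ℕ) : ℕ := (Nat.digits b n).sum

open Finset Nat

namespace LnzAux

/-- Product of the non-multiples of `p` among `1, …, N` (multiples replaced by 1). -/
def Uu (p N : ℕ) : ℕ := ∏ j ∈ Finset.range N, if p ∣ (j + 1) then 1 else (j + 1)

/-- Product of the multiples of `p` among `1, …, N` (non-multiples replaced by 1). -/
def Aa (p N : ℕ) : ℕ := ∏ j ∈ Finset.range N, if p ∣ (j + 1) then (j + 1) else 1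

variable {p : ℕ}

lemma Aa_mul_Uu (p N : ℕ) : Aa p N * Uu p N = N ! := by
  rw [Aa, Uu, ← Finset.prod_mul_distrib, ← Finset.prod_range_add_one_eq_factorial]
  refine Finset.prod_congr rfl fun j _ => ?_
  split_ifs <;> simp

lemma not_dvd_Uu (hp : p.Prime) (N : ℕ) : ¬ p ∣ Uu p N := by
  intro h
  obtain ⟨j, -, hj⟩ := (hp.prime.dvd_finset_prod_iff _).1 h
  by_cases hd : p ∣ (j + 1)
  · rw [if_pos hd] at hj; exact hp.ne_one (Nat.dvd_one.mp hj)
  · rw [if_neg hd] at hj; exact hd hj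

lemma Uu_pos (hp : p.Prime) (N : ℕ) : 0 < Uu p N :=
  Nat.pos_of_ne_zero fun h => not_dvd_Uu hp N (h ▸ dvd_zero p)

lemma Aa_mul (hp : p.Prime) (m : ℕ) : Aa p (p * m) = p ^ m * m ! := by
  induction m with
  | zero => simp [Aa]
  | succ m ih =>
    have hp2 := hp.two_le
    have h1 : p * (m + 1) = p * m + p := by ring
    rw [h1, Aa, Finset.prod_range_add, ← Aa, ih]
    have h2 : (∏ k ∈ Finset.range p,
        if p ∣ (p * m + k + 1) then (p * m + k + 1) else 1) = p * m + p := by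
      rw [Finset.prod_eq_single (p - 1)]
      · have : p * m + (p - 1) + 1 = p * m + p := by omega
        rw [this, if_pos ⟨m + 1, by ring⟩]
      · intro k hk hkne
        have hk' := Finset.mem_range.mp hk
        rw [if_neg]
        intro hd
        have : p ∣ k + 1 := (Nat.dvd_add_right ⟨m, rfl⟩).mp (by rwa [add_assoc] at hd)
        have := Nat.le_of_dvd (Nat.succ_pos k) this
        omega
      · intro h; exact absurd (Finset.mem_range.mpr (by omega)) h
    rw [h2, pow_succ, Nat.factorial_succ]
    ring

end LnzAux

namespace LnzAux2
open LnzAux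

variable {p : ℕ}

/-- The `p`-free part of `n!`. -/
def Ww (p n : ℕ) : ℕ := n ! / p ^ padicValNat p (n !)

lemma padic_unique (hp : p.Prime) {N s x : ℕ} (hN : N = p ^ s * x) (hx : ¬ p ∣ x) :
    padicValNat p N = s := by
  haveI : Fact p.Prime := ⟨hp⟩
  have hx0 : x ≠ 0 := fun h => hx (h ▸ dvd_zero p)
  subst hN
  rw [padicValNat.mul (pow_ne_zero _ hp.pos.ne') hx0, padicValNat.prime_pow,
    padicValNat.eq_zero_of_not_dvd hx, add_zero]

lemma part_unique (hp : p.Prime) {N s x : ℕ} (hN : N = p ^ s * x) (hx : ¬ p ∣ x) :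
    N / p ^ padicValNat p N = x := by
  rw [padic_unique hp hN hx, hN, Nat.mul_div_cancel_left _ (Nat.pow_pos hp.pos)]

lemma fact_p_mul (hp : p.Prime) (m : ℕ) :
    (p * m)! = p ^ (m + padicValNat p (m !)) * (Ww p m * Uu p (p * m)) := by
  have hm : m ! = p ^ padicValNat p (m !) * Ww p m :=
    (Nat.mul_div_cancel' pow_padicValNat_dvd).symm
  rw [← Aa_mul_Uu p (p * m), Aa_mul hp, pow_add]
  conv_lhs => rw [hm]
  ring

lemma not_dvd_Ww (hp : p.Prime) (m : ℕ) : ¬ p ∣ Ww p m := by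
  haveI : Fact p.Prime := ⟨hp⟩
  rintro ⟨c, hc⟩
  refine pow_succ_padicValNat_not_dvd (p := p) m.factorial_ne_zero ⟨c, ?_⟩
  rw [pow_succ, mul_assoc, ← hc, Ww, Nat.mul_div_cancel' pow_padicValNat_dvd]

lemma v_fact_p_mul (hp : p.Prime) (m : ℕ) :
    padicValNat p ((p * m)!) = m + padicValNat p (m !) :=
  padic_unique hp (fact_p_mul hp m)
    (fun h => (hp.prime.dvd_mul.mp h).elim (not_dvd_Ww hp m) (not_dvd_Uu hp _))

lemma Ww_p_mul (hp : p.Prime) (m : ℕ) : Ww p (p * m) = Ww p m * Uu p (p * m) :=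
  part_unique hp (fact_p_mul hp m)
    (fun h => (hp.prime.dvd_mul.mp h).elim (not_dvd_Ww hp m) (not_dvd_Uu hp _))

lemma Ww_pow_mul (hp : p.Prime) (n i : ℕ) :
    Ww p (p ^ i * n) = Ww p n * ∏ t ∈ Finset.range i, Uu p (p ^ (t + 1) * n) := by
  induction i with
  | zero => simp
  | succ i ih =>
    have h1 : p ^ (i + 1) * n = p * (p ^ i * n) := by ring
    rw [h1, Ww_p_mul hp, ih, Finset.prod_range_succ, ← h1, mul_assoc]

lemma v_fact_pow_mul (hp : p.Prime) (n i : ℕ) :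
    padicValNat p ((p ^ i * n)!) = padicValNat p (n !) + n * ∑ t ∈ Finset.range i, p ^ t := by
  induction i with
  | zero => simp
  | succ i ih =>
    have h1 : p ^ (i + 1) * n = p * (p ^ i * n) := by ring
    rw [h1, v_fact_p_mul hp, ih, Finset.sum_range_succ]
    ring

lemma fact_add_prod (N d : ℕ) : (N + d)! = N ! * ∏ k ∈ Finset.range d, (N + k + 1) := by
  induction d with
  | zero => simp
  | succ d ih =>
    rw [← add_assoc, Nat.factorial_succ, ih, Finset.prod_range_succ]
    ring

end LnzAux2

namespace LnzAux3
open LnzAux LnzAux2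

variable {p a : ℕ}

lemma fact_decomp (p n : ℕ) : n ! = p ^ padicValNat p (n !) * Ww p n :=
  (Nat.mul_div_cancel' pow_padicValNat_dvd).symm

/-- The `p`-free part of `p^a * n + j` (for `0 < j < p^a`). -/
def yNat (p q n j : ℕ) : ℕ := q / p ^ padicValNat p j * n + j / p ^ padicValNat p j

lemma term_decomp (hp : p.Prime) {j : ℕ} (hj0 : 0 < j) (hjq : j < p ^ a) (n : ℕ) :
    p ^ a * n + j = p ^ padicValNat p j * yNat p (p ^ a) n j ∧ ¬ p ∣ yNat p (p ^ a) n j := by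
  haveI : Fact p.Prime := ⟨hp⟩
  set e := padicValNat p j with he
  have hej : p ^ e ∣ j := pow_padicValNat_dvd
  have hea : e < a := by
    by_contra hle
    exact absurd (Nat.le_of_dvd hj0 ((pow_dvd_pow p (le_of_not_gt hle)).trans hej)) (by omega)
  have heq : p ^ e ∣ p ^ a := pow_dvd_pow p hea.le
  constructor
  · rw [yNat, Nat.mul_add, ← mul_assoc, Nat.mul_div_cancel' heq, Nat.mul_div_cancel' hej]
  · rw [yNat]
    have h1 : p ∣ p ^ a / p ^ e * n := by
      refine Dvd.dvd.mul_right ?_ n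
      rw [Nat.pow_div hea.le hp.pos]
      exact dvd_pow_self p (by omega)
    rw [Nat.dvd_add_right h1]
    intro hdvd
    refine pow_succ_padicValNat_not_dvd (p := p) hj0.ne' ?_
    obtain ⟨c, hc⟩ := hdvd
    exact ⟨c, by rw [pow_succ, mul_assoc, ← hc, Nat.mul_div_cancel' hej]⟩

lemma v_fact_sum (hp : p.Prime) (d : ℕ) :
    padicValNat p (d !) = ∑ k ∈ Finset.range d, padicValNat p (k + 1) := by
  haveI : Fact p.Prime := ⟨hp⟩
  induction d with
  | zero => simp
  | succ d ih =>
    rw [Nat.factorial_succ, padicValNat.mul (Nat.succ_ne_zero d) d.factorial_ne_zero,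
      Finset.sum_range_succ, ih]
    ring

lemma prod_decomp (hp : p.Prime) {d : ℕ} (hd : d < p ^ a) (n : ℕ) :
    ∏ k ∈ Finset.range d, (p ^ a * n + k + 1) =
      p ^ padicValNat p (d !) * ∏ k ∈ Finset.range d, yNat p (p ^ a) n (k + 1) := by
  have hterm : ∀ k ∈ Finset.range d, p ^ a * n + k + 1 =
      p ^ padicValNat p (k + 1) * yNat p (p ^ a) n (k + 1) := by
    intro k hk
    have hk' := Finset.mem_range.mp hk
    rw [add_assoc]
    exact (term_decomp hp (Nat.succ_pos k) (by omega) n).1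
  rw [Finset.prod_congr rfl hterm, Finset.prod_mul_distrib, Finset.prod_pow_eq_pow_sum,
    v_fact_sum hp]

lemma not_dvd_prod_y (hp : p.Prime) {d : ℕ} (hd : d < p ^ a) (n : ℕ) :
    ¬ p ∣ ∏ k ∈ Finset.range d, yNat p (p ^ a) n (k + 1) := by
  intro h
  obtain ⟨k, hk, hdvd⟩ := (hp.prime.dvd_finset_prod_iff _).1 h
  have hk' := Finset.mem_range.mp hk
  exact (term_decomp hp (Nat.succ_pos k) (by omega) n).2 hdvd

lemma main_decomp (hp : p.Prime) {d : ℕ} (hd : d < p ^ a) (n : ℕ) :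
    (p ^ a * n + d)! =
      p ^ ((padicValNat p (n !) + n * ∑ t ∈ Finset.range a, p ^ t) + padicValNat p (d !)) *
        ((Ww p n * ∏ t ∈ Finset.range a, Uu p (p ^ (t + 1) * n)) *
          ∏ k ∈ Finset.range d, yNat p (p ^ a) n (k + 1)) := by
  have h1 : (p ^ a * n + d)! = (p ^ a * n)! * ∏ k ∈ Finset.range d, (p ^ a * n + k + 1) := by
    rw [fact_add_prod]
  rw [h1, fact_decomp p (p ^ a * n), prod_decomp hp hd n, v_fact_pow_mul hp,
    Ww_pow_mul hp, pow_add]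
  ring

lemma not_dvd_main (hp : p.Prime) {d : ℕ} (hd : d < p ^ a) (n : ℕ) :
    ¬ p ∣ (Ww p n * ∏ t ∈ Finset.range a, Uu p (p ^ (t + 1) * n)) *
          ∏ k ∈ Finset.range d, yNat p (p ^ a) n (k + 1) := by
  intro h
  rcases hp.prime.dvd_mul.mp h with h | h
  · rcases hp.prime.dvd_mul.mp h with h | h
    · exact not_dvd_Ww hp n h
    · obtain ⟨t, -, ht⟩ := (hp.prime.dvd_finset_prod_iff _).1 h
      exact not_dvd_Uu hp _ ht
  · exact not_dvd_prod_y hp hd n h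

lemma v_main (hp : p.Prime) {d : ℕ} (hd : d < p ^ a) (n : ℕ) :
    padicValNat p ((p ^ a * n + d)!) =
      (padicValNat p (n !) + n * ∑ t ∈ Finset.range a, p ^ t) + padicValNat p (d !) :=
  padic_unique hp (main_decomp hp hd n) (not_dvd_main hp hd n)

lemma Ww_main (hp : p.Prime) {d : ℕ} (hd : d < p ^ a) (n : ℕ) :
    Ww p (p ^ a * n + d) =
      (Ww p n * ∏ t ∈ Finset.range a, Uu p (p ^ (t + 1) * n)) *
        ∏ k ∈ Finset.range d, yNat p (p ^ a) n (k + 1) :=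
  part_unique hp (main_decomp hp hd n) (not_dvd_main hp hd n)

end LnzAux3

namespace LnzAux4
open LnzAux LnzAux2 LnzAux3

variable {p a : ℕ}

lemma q_two_le (hp : p.Prime) (ha : 0 < a) : 2 ≤ p ^ a :=
  le_trans hp.two_le (Nat.le_self_pow ha.ne' p)

lemma prod_shift (hp : p.Prime) (ha : 0 < a) (N : ℕ) :
    ((∏ k ∈ Finset.range (p ^ a), if p ∣ (N + k + 1) then 1 else (N + k + 1) : ℕ) :
        ZMod (p ^ a)) = ((Uu p (p ^ a) : ℕ) : ZMod (p ^ a)) := by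
  haveI : NeZero (p ^ a) := ⟨by have := q_two_le hp ha; omega⟩
  have hpq : p ∣ p ^ a := dvd_pow_self p ha.ne'
  have key : ∀ N : ℕ,
      ((∏ k ∈ Finset.range (p ^ a), if p ∣ (N + k + 1) then 1 else (N + k + 1) : ℕ) :
        ZMod (p ^ a)) =
      ∏ x : ZMod (p ^ a), (if p ∣ x.val then 1 else x) := by
    intro N
    rw [Nat.cast_prod]
    refine Finset.prod_nbij' (fun k => ((N + k + 1 : ℕ) : ZMod (p ^ a)))
      (fun x => (x - ((N + 1 : ℕ) : ZMod (p ^ a))).val) (fun k _ => Finset.mem_univ _)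
      (fun x _ => Finset.mem_range.mpr (ZMod.val_lt _)) ?_ ?_ ?_
    · intro k hk
      have hk' := Finset.mem_range.mp hk
      have h2 : ((N + k + 1 : ℕ) : ZMod (p ^ a)) - ((N + 1 : ℕ) : ZMod (p ^ a)) =
          ((k : ℕ) : ZMod (p ^ a)) := by push_cast; ring
      rw [h2, ZMod.val_natCast, Nat.mod_eq_of_lt hk']
    · intro x _
      push_cast
      rw [ZMod.natCast_val, ZMod.cast_id]
      ring
    · intro k _
      have hval : (((N + k + 1 : ℕ) : ZMod (p ^ a))).val = (N + k + 1) % (p ^ a) :=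
        ZMod.val_natCast _ _
      by_cases h : p ∣ (N + k + 1)
      · rw [if_pos h, if_pos (by rw [hval]; exact (Nat.dvd_mod_iff hpq).mpr h)]
        simp
      · rw [if_neg h, if_neg (by rw [hval]; exact fun hc => h ((Nat.dvd_mod_iff hpq).mp hc))]
  have hU : Uu p (p ^ a) = ∏ k ∈ Finset.range (p ^ a),
      if p ∣ (0 + k + 1) then 1 else (0 + k + 1) := by simp [Uu]
  rw [key N, hU, key 0]

lemma castUu_add (hp : p.Prime) (ha : 0 < a) (N : ℕ) :
    ((Uu p (N + p ^ a) : ℕ) : ZMod (p ^ a)) =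
      ((Uu p N : ℕ) : ZMod (p ^ a)) * ((Uu p (p ^ a) : ℕ) : ZMod (p ^ a)) := by
  have h1 : Uu p (N + p ^ a) = Uu p N * ∏ k ∈ Finset.range (p ^ a),
      if p ∣ (N + k + 1) then 1 else (N + k + 1) := by
    rw [Uu, Finset.prod_range_add, ← Uu]
  rw [h1, Nat.cast_mul, prod_shift hp ha N]

lemma castUu_period (hp : p.Prime) (ha : 0 < a) (c r : ℕ) :
    ((Uu p (c * p ^ a + r) : ℕ) : ZMod (p ^ a)) =
      ((Uu p (p ^ a) : ℕ) : ZMod (p ^ a)) ^ c * ((Uu p r : ℕ) : ZMod (p ^ a)) := by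
  induction c with
  | zero => simp
  | succ c ih =>
    have h1 : (c + 1) * p ^ a + r = (c * p ^ a + r) + p ^ a := by ring
    rw [h1, castUu_add hp ha, ih, pow_succ]
    ring

lemma castUu_mod (hp : p.Prime) (ha : 0 < a) (N : ℕ) :
    ((Uu p N : ℕ) : ZMod (p ^ a)) =
      ((Uu p (p ^ a) : ℕ) : ZMod (p ^ a)) ^ (N / p ^ a) *
        ((Uu p (N % p ^ a) : ℕ) : ZMod (p ^ a)) := by
  conv_lhs => rw [← Nat.div_add_mod N (p ^ a)]
  rw [← castUu_period hp ha, Nat.mul_comm]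

lemma isUnit_eps (hp : p.Prime) (ha : 0 < a) :
    IsUnit ((Uu p (p ^ a) : ℕ) : ZMod (p ^ a)) := by
  rw [ZMod.isUnit_iff_coprime]
  exact Nat.Coprime.pow_right a
    (((Nat.Prime.coprime_iff_not_dvd hp).mpr (not_dvd_Uu hp _)).symm)

lemma eps_pow_totient (hp : p.Prime) (ha : 0 < a) :
    ((Uu p (p ^ a) : ℕ) : ZMod (p ^ a)) ^ (p ^ a).totient = 1 := by
  haveI : NeZero (p ^ a) := ⟨by have := q_two_le hp ha; omega⟩
  have hu := isUnit_eps hp ha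
  have := ZMod.pow_totient hu.unit
  calc ((Uu p (p ^ a) : ℕ) : ZMod (p ^ a)) ^ (p ^ a).totient
      = ((hu.unit : (ZMod (p ^ a))ˣ) : ZMod (p ^ a)) ^ (p ^ a).totient := by rw [hu.unit_spec]
    _ = (((hu.unit ^ (p ^ a).totient : (ZMod (p ^ a))ˣ)) : ZMod (p ^ a)) := by
        rw [Units.val_pow_eq_pow_val]
    _ = 1 := by rw [this]; rfl

lemma pow_mod_eq_pow {R : Type*} [Monoid R] {x : R} {m : ℕ} (hx : x ^ m = 1) (k : ℕ) :
    x ^ k = x ^ (k % m) := by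
  conv_lhs => rw [← Nat.div_add_mod k m]
  rw [pow_add, pow_mul, hx, one_pow, one_mul]

end LnzAux4

namespace LnzAux5
open LnzAux LnzAux2 LnzAux3 LnzAux4

/-- Period for the `Uu`-values. -/
def Φn (p a : ℕ) : ℕ := p ^ a * (p ^ a).totient

/-- Modulus for the first state component. -/
def Mn (p a : ℕ) : ℕ := Φn p a * a

variable {p a : ℕ}

lemma q_dvd_Φ : p ^ a ∣ Φn p a := dvd_mul_right _ _
lemma Φ_dvd_M : Φn p a ∣ Mn p a := dvd_mul_right _ _
lemma q_dvd_M : p ^ a ∣ Mn p a := q_dvd_Φ.trans Φ_dvd_M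
lemma a_dvd_M : a ∣ Mn p a := dvd_mul_left _ _

lemma neZero_q (hp : p.Prime) (ha : 0 < a) : NeZero (p ^ a) :=
  ⟨by have := q_two_le hp ha; omega⟩

lemma neZero_Φ (hp : p.Prime) (ha : 0 < a) : NeZero (Φn p a) := by
  have h1 := q_two_le hp ha
  have h2 := Nat.totient_pos.mpr (show 0 < p ^ a by omega)
  exact ⟨(Nat.mul_pos (show 0 < p ^ a by omega) h2).ne'⟩

lemma neZero_M (hp : p.Prime) (ha : 0 < a) : NeZero (Mn p a) := by
  have h2 := (neZero_Φ hp ha).out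
  have h3 : 0 < Φn p a := Nat.pos_of_ne_zero h2
  exact ⟨(Nat.mul_pos h3 ha).ne'⟩

/-- The value of `Uu p N` mod `p^a`, as a function of `N` mod `Φn p a`. -/
def uF (p a : ℕ) (s : ZMod (Φn p a)) : ZMod (p ^ a) :=
  ((Uu p (p ^ a) : ℕ) : ZMod (p ^ a)) ^ (s.val / p ^ a) *
    ((Uu p (s.val % p ^ a) : ℕ) : ZMod (p ^ a))

lemma uF_natCast (hp : p.Prime) (ha : 0 < a) (N : ℕ) :
    uF p a ((N : ℕ) : ZMod (Φn p a)) = ((Uu p N : ℕ) : ZMod (p ^ a)) := by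
  haveI := neZero_Φ hp ha
  rw [uF, ZMod.val_natCast, castUu_mod hp ha N, Nat.mod_mod_of_dvd N q_dvd_Φ,
    Φn, Nat.mod_mul_right_div_self, ← pow_mod_eq_pow (eps_pow_totient hp ha)]

/-- The value of `yNat p (p^a) n j` mod `p^a`, as a function of `n` mod `p^a`. -/
def ycZ (p a : ℕ) (x : ZMod (p ^ a)) (j : ℕ) : ZMod (p ^ a) :=
  ((p ^ a / p ^ padicValNat p j : ℕ) : ZMod (p ^ a)) * x +
    ((j / p ^ padicValNat p j : ℕ) : ZMod (p ^ a))

lemma ycZ_natCast (n j : ℕ) :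
    ycZ p a ((n : ℕ) : ZMod (p ^ a)) j = ((yNat p (p ^ a) n j : ℕ) : ZMod (p ^ a)) := by
  rw [ycZ, yNat]
  push_cast
  ring

/-- The transition function of the automaton. -/
def stepS (p a : ℕ) (s : ZMod (Mn p a) × ZMod a × ZMod (p ^ a)) (d : ℕ) :
    ZMod (Mn p a) × ZMod a × ZMod (p ^ a) :=
  ⟨((p ^ a : ℕ) : ZMod (Mn p a)) * s.1 + ((d : ℕ) : ZMod (Mn p a)),
   s.2.1 + ZMod.castHom a_dvd_M (ZMod a) s.1 * ((∑ t ∈ Finset.range a, p ^ t : ℕ) : ZMod a)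
     + ((padicValNat p (d !) : ℕ) : ZMod a),
   s.2.2 * (∏ t ∈ Finset.range a,
       uF p a (ZMod.castHom Φ_dvd_M (ZMod (Φn p a)) (((p ^ (t + 1) : ℕ) : ZMod (Mn p a)) * s.1)))
     * ∏ k ∈ Finset.range d, ycZ p a (ZMod.castHom q_dvd_M (ZMod (p ^ a)) s.1) (k + 1)⟩

/-- The state associated with `n`. -/
def fSt (p a n : ℕ) : ZMod (Mn p a) × ZMod a × ZMod (p ^ a) :=
  ((n : ZMod (Mn p a)), ((padicValNat p (n !) : ℕ) : ZMod a),
    ((Ww p n : ℕ) : ZMod (p ^ a)))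

lemma step_fSt (hp : p.Prime) (ha : 0 < a) (n : ℕ) {d : ℕ} (hd : d < p ^ a) :
    stepS p a (fSt p a n) d = fSt p a (p ^ a * n + d) := by
  refine Prod.ext ?_ (Prod.ext ?_ ?_)
  · show ((p ^ a : ℕ) : ZMod (Mn p a)) * (n : ZMod (Mn p a)) + ((d : ℕ) : ZMod (Mn p a)) =
      ((p ^ a * n + d : ℕ) : ZMod (Mn p a))
    push_cast
    ring
  · show ((padicValNat p (n !) : ℕ) : ZMod a) +
      ZMod.castHom a_dvd_M (ZMod a) ((n : ℕ) : ZMod (Mn p a)) *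
        ((∑ t ∈ Finset.range a, p ^ t : ℕ) : ZMod a) + ((padicValNat p (d !) : ℕ) : ZMod a) =
      ((padicValNat p ((p ^ a * n + d)!) : ℕ) : ZMod a)
    rw [v_main hp hd n, map_natCast]
    push_cast
    ring
  · show ((Ww p n : ℕ) : ZMod (p ^ a)) * (∏ t ∈ Finset.range a,
        uF p a (ZMod.castHom Φ_dvd_M (ZMod (Φn p a))
          (((p ^ (t + 1) : ℕ) : ZMod (Mn p a)) * ((n : ℕ) : ZMod (Mn p a)))))
      * ∏ k ∈ Finset.range d,
          ycZ p a (ZMod.castHom q_dvd_M (ZMod (p ^ a)) ((n : ℕ) : ZMod (Mn p a))) (k + 1) =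
      ((Ww p (p ^ a * n + d) : ℕ) : ZMod (p ^ a))
    rw [Ww_main hp hd n]
    push_cast
    congr 1
    · congr 1
      refine Finset.prod_congr rfl fun t _ => ?_
      rw [← Nat.cast_pow, ← Nat.cast_mul, map_natCast, uF_natCast hp ha]
    · refine Finset.prod_congr rfl fun k _ => ?_
      rw [map_natCast, ycZ_natCast]

end LnzAux5

namespace LnzAux6
open LnzAux LnzAux2 LnzAux3 LnzAux4 LnzAux5

variable {p a : ℕ}

lemma v_q_fact (hp : p.Prime) (ha : 0 < a) (n : ℕ) :
    padicValNat (p ^ a) (n !) = padicValNat p (n !) / a := by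
  haveI : Fact p.Prime := ⟨hp⟩
  have hq2 : 1 < p ^ a := q_two_le hp ha
  have hm : padicValNat (p ^ a) (n !) = (p ^ a).maxPowDiv (n !) := by
    rfl
  rw [hm]
  apply le_antisymm
  · rw [Nat.le_div_iff_mul_le ha]
    rw [← padicValNat_dvd_iff_le n.factorial_ne_zero, mul_comm, pow_mul]
    exact Nat.maxPowDiv.pow_dvd
  · refine (pow_dvd_iff_le_padicValNat hq2.ne' n.factorial_ne_zero).mp ?_
    calc (p ^ a) ^ (padicValNat p (n !) / a) = p ^ (a * (padicValNat p (n !) / a)) := by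
          rw [pow_mul]
      _ ∣ p ^ padicValNat p (n !) := pow_dvd_pow p (by
          rw [mul_comm]; exact Nat.div_mul_le_self _ _)
      _ ∣ n ! := pow_padicValNat_dvd

lemma lnz_fact (hp : p.Prime) (ha : 0 < a) (n : ℕ) :
    lnz (p ^ a) (n !) =
      (((p : ℕ) : ZMod (p ^ a)) ^ (((padicValNat p (n !) : ℕ) : ZMod a)).val
        * ((Ww p n : ℕ) : ZMod (p ^ a))).val := by
  haveI := neZero_q hp ha
  haveI : NeZero a := ⟨ha.ne'⟩
  set v := padicValNat p (n !) with hv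
  have hdecomp : n ! / (p ^ a) ^ (v / a) = p ^ (v % a) * Ww p n := by
    have h1 : n ! = (p ^ a) ^ (v / a) * (p ^ (v % a) * Ww p n) := by
      conv_lhs => rw [fact_decomp p n, ← hv, ← Nat.div_add_mod v a]
      rw [pow_add, pow_mul, mul_assoc]
    rw [h1, Nat.mul_div_cancel_left _ (Nat.pow_pos (by have := hp.pos; positivity))]
  rw [lnz, v_q_fact hp ha, ← hv, hdecomp, ← ZMod.val_natCast]
  rw [Nat.cast_mul, Nat.cast_pow, ZMod.val_natCast (n := a) v]

end LnzAux6

/-- If `b = p ^ a` with `p` prime and `a ≥ 1`, then the sequence of last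
nonzero digits of `n !` in base `b` is `b`-automatic. -/
theorem lnz_factorial_automatic_of_prime_pow (p a : ℕ) (hp : p.Prime) (ha : 0 < a) :
    IsAutomatic (p ^ a) (fun n => lnz (p ^ a) (Nat.factorial n)) := by
  haveI := LnzAux5.neZero_q hp ha
  haveI := LnzAux5.neZero_M hp ha
  haveI : NeZero a := ⟨ha.ne'⟩
  have hq2 : 1 < p ^ a := LnzAux4.q_two_le hp ha
  refine ⟨ZMod (LnzAux5.Mn p a) × ZMod a × ZMod (p ^ a), inferInstance,
    fun s d => LnzAux5.stepS p a s d.val, LnzAux5.fSt p a 0,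
    fun s => (((p : ℕ) : ZMod (p ^ a)) ^ s.2.1.val * s.2.2).val, fun n => ?_⟩
  have hrun : ∀ n : ℕ, autoRun (p ^ a) (fun s d => LnzAux5.stepS p a s d.val)
      (LnzAux5.fSt p a 0) n = LnzAux5.fSt p a n := by
    intro n
    induction n using Nat.strong_induction_on with
    | _ n ih =>
      rcases Nat.eq_zero_or_pos n with hn | hn
      · subst hn
        simp [autoRun]
      · have hdiv : n / p ^ a < n := Nat.div_lt_self hn hq2
        have hmod : n % p ^ a < p ^ a := Nat.mod_lt n (by omega)
        rw [autoRun, Nat.digits_def' hq2 hn, List.reverse_cons, List.foldl_append]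
        rw [show ((Nat.digits (p ^ a) (n / p ^ a)).reverse.foldl
          (fun q d => if h : d < p ^ a then
            LnzAux5.stepS p a q (⟨d, h⟩ : Fin (p ^ a)).val else q)
          (LnzAux5.fSt p a 0)) = LnzAux5.fSt p a (n / p ^ a) from ih _ hdiv]
        rw [List.foldl_cons, List.foldl_nil, dif_pos hmod]
        rw [LnzAux5.step_fSt hp ha (n / p ^ a) hmod, Nat.div_add_mod]
  rw [hrun n]
  exact LnzAux6.lnz_fact hp ha n
end

section
/- Let b ≥ 2 be an integer with prime factorization b = p₁^{a₁} p₂^{a₂} ⋯ p_r^{a_r} with r ≥ 2 distinct primes, ordered so that a₁(p₁−1) > a_i(p_i−1) for all i ≥ 2. Then the sequence (ℓ_b(n!))_{n∈ℕ} of last nonzero digits of n! in base b is p₁-automatic. -/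
open Nat Finset


lemma sq_le_four_pow (C : ℕ) : (C+1)^2 ≤ 4^C := by
  induction C with
  | zero => norm_num
  | succ C ih =>
    have : (C+2)^2 ≤ 4*(C+1)^2 := by ring_nf; nlinarith
    calc (C+2)^2 ≤ 4*(C+1)^2 := this
    _ ≤ 4*4^C := by omega
    _ = 4^(C+1) := by ring

lemma log_master (C : ℕ) : ∀ n, C * (Nat.log 2 n + 2) ≤ 2*n + 4^C := by
  intro n
  induction n using Nat.strong_induction_on with
  | _ n ih =>
    rcases le_or_gt n 1 with h1 | h1
    · interval_cases n <;> simp [Nat.log_zero_right, Nat.log_one_right] <;> nlinarith [sq_le_four_pow C]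
    rcases le_or_gt C n with hC | hC
    · have hlog : Nat.log 2 n = Nat.log 2 (n/2) + 1 := by
        have h2 := Nat.log_div_base 2 n
        have h3 : 0 < Nat.log 2 n := Nat.log_pos (by norm_num) (by omega)
        omega
      have := ih (n/2) (by omega)
      have hn2 : 2*(n/2) ≤ n := Nat.mul_div_le n 2
      calc C * (Nat.log 2 n + 2) = C * (Nat.log 2 (n/2) + 2) + C := by rw [hlog]; ring
      _ ≤ (2*(n/2) + 4^C) + C := by omega
      _ ≤ 2*n + 4^C := by omega
    · have hlog : Nat.log 2 n ≤ C := le_trans (Nat.log_mono_right hC.le) (Nat.log_lt_self 2 (by omega)).le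
      have h4 := sq_le_four_pow C
      have : C * (Nat.log 2 n + 2) ≤ C * (C + 2) := Nat.mul_le_mul_left _ (by omega)
      nlinarith

lemma exists_log_bound (C D : ℕ) (hD : 0 < D) : ∃ N, ∀ n ≥ N, C * (Nat.log 2 n + 2) ≤ n / D := by
  refine ⟨4 ^ (3*C*D), fun n hn => ?_⟩
  have h1 := log_master (3*C*D) n
  have h2 : 3*C*D * (Nat.log 2 n + 2) ≤ 3*n := by omega
  have h3 : C*D * (Nat.log 2 n + 2) ≤ n := by
    have : 3 * (C*D * (Nat.log 2 n + 2)) ≤ 3 * n := by ring_nf; ring_nf at h2; omega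
    omega
  rw [Nat.le_div_iff_mul_le hD]
  calc C * (Nat.log 2 n + 2) * D = C*D*(Nat.log 2 n + 2) := by ring
  _ ≤ n := h3


lemma digSum_step {b : ℕ} (hb : 2 ≤ b) {n : ℕ} (hn : n ≠ 0) :
    digSum b n = n % b + digSum b (n / b) := by
  unfold digSum
  rw [Nat.digits_def' (by omega : 1 < b) (Nat.pos_of_ne_zero hn)]
  simp

lemma digSum_le {b : ℕ} (hb : 2 ≤ b) : ∀ n, digSum b n ≤ n := by
  intro n
  induction n using Nat.strong_induction_on with
  | _ n ih =>
    rcases eq_or_ne n 0 with rfl | hn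
    · simp [digSum]
    · rw [digSum_step hb hn]
      have h1 := ih (n / b) (Nat.div_lt_self (Nat.pos_of_ne_zero hn) (by omega))
      have h2 : b * (n / b) + n % b = n := Nat.div_add_mod n b
      have h3 : n / b + n % b ≤ n := by nlinarith [Nat.div_le_self n b]
      omega

lemma digSum_le_log {b : ℕ} (hb : 2 ≤ b) (n : ℕ) :
    digSum b n ≤ (b - 1) * (Nat.log b n + 1) := by
  rcases eq_or_ne n 0 with rfl | hn
  · simp [digSum]
  have hlen : (Nat.digits b n).length = Nat.log b n + 1 := Nat.digits_len b n (by omega) hn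
  have : (Nat.digits b n).sum ≤ (Nat.digits b n).length • (b - 1) := by
    apply List.sum_le_card_nsmul
    intro x hx
    have := Nat.digits_lt_base (by omega : 1 < b) hx
    omega
  simpa [digSum, hlen, smul_eq_mul, Nat.mul_comm] using this

lemma legendre {p : ℕ} (hp : p.Prime) (n : ℕ) :
    (p - 1) * padicValNat p (n !) = n - digSum p n := by
  haveI : Fact p.Prime := ⟨hp⟩
  simpa [digSum] using sub_one_mul_padicValNat_factorial (p := p) n

lemma padicValNat_eq_of_dvd_not_dvd {b m t : ℕ} (hb : 1 < b) (hm : 0 < m)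
    (h1 : b ^ t ∣ m) (h2 : ¬ b ^ (t+1) ∣ m) : padicValNat b m = t := by
  rw [padicValNat_def' (by omega) hm.ne']
  exact multiplicity_eq_of_dvd_of_not_dvd h1 h2

lemma prime_pow_dvd_iff {p m k : ℕ} (hp : p.Prime) (hm : m ≠ 0) :
    p ^ k ∣ m ↔ k ≤ padicValNat p m := by
  haveI : Fact p.Prime := ⟨hp⟩
  exact padicValNat_dvd_iff_le hm

lemma padicValNat_factorial_step {p : ℕ} (hp : p.Prime) (k d : ℕ) (hd : d < p) :
    padicValNat p ((p * k + d)!) = k + padicValNat p (k !) := by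
  haveI : Fact p.Prime := ⟨hp⟩
  rw [padicValNat_factorial_mul_add k hd, padicValNat_factorial_mul]
  omega

/-- product of integers in `[1, n]` not divisible by `p` -/
def Wp (p n : ℕ) : ℕ := ∏ j ∈ (Finset.range n).filter (fun j => ¬ p ∣ (j+1)), (j+1)

def Upart (p n : ℕ) : ℕ := n ! / p ^ (padicValNat p (n !))

lemma Wp_zero (p : ℕ) : Wp p 0 = 1 := by simp [Wp]

lemma Upart_zero (p : ℕ) : Upart p 0 = 1 := by simp [Upart]

lemma factorial_split {p : ℕ} (hp : p.Prime) (n : ℕ) :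
    n ! = Wp p n * (p ^ (n/p) * (n/p)!) := by
  have h0 : (∏ j ∈ (Finset.range n).filter (fun j => p ∣ (j+1)), (j+1)) *
      (∏ j ∈ (Finset.range n).filter (fun j => ¬ p ∣ (j+1)), (j+1)) = n ! := by
    rw [Finset.prod_filter_mul_prod_filter_not, Finset.prod_range_add_one_eq_factorial]
  have hb : (∏ j ∈ (Finset.range n).filter (fun j => p ∣ (j+1)), (j+1)) =
      ∏ i ∈ Finset.range (n/p), (p * (i+1)) := by
    apply Finset.prod_nbij' (fun j => (j+1)/p - 1) (fun i => p*(i+1) - 1)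
    · intro a ha
      simp only [Finset.mem_filter, Finset.mem_range] at ha ⊢
      obtain ⟨han, m, hm⟩ := ha
      have hm1 : 1 ≤ m := by nlinarith [hp.pos]
      have h1 : (a+1)/p = m := by rw [hm]; exact Nat.mul_div_cancel_left m hp.pos
      rw [h1]
      have h2 : m ≤ n / p := by
        rw [Nat.le_div_iff_mul_le hp.pos, mul_comm]
        omega
      omega
    · intro i hi
      simp only [Finset.mem_range] at hi
      simp only [Finset.mem_filter, Finset.mem_range]
      have h2 : p * (i + 1) ≤ n := by
        have h3 := (Nat.le_div_iff_mul_le hp.pos).mp (by omega : i + 1 ≤ n / p)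
        have h3b : p * (i+1) = (i+1) * p := mul_comm _ _
        omega
      have hpos : 0 < p * (i+1) := Nat.mul_pos hp.pos (by omega)
      constructor
      · omega
      · have h4 : p*(i+1) - 1 + 1 = p*(i+1) := by omega
        rw [h4]
        exact Dvd.intro _ rfl
    · intro a ha
      simp only [Finset.mem_filter, Finset.mem_range] at ha
      obtain ⟨han, m, hm⟩ := ha
      have hm1 : 1 ≤ m := by nlinarith [hp.pos]
      have h1 : (a+1)/p = m := by rw [hm]; exact Nat.mul_div_cancel_left m hp.pos
      rw [h1]
      have h5 : m - 1 + 1 = m := by omega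
      rw [h5]; omega
    · intro i hi
      simp only [Finset.mem_range] at hi
      have hpos : 0 < p * (i+1) := Nat.mul_pos hp.pos (by omega)
      have h1 : p*(i+1) - 1 + 1 = p*(i+1) := by omega
      rw [h1, Nat.mul_div_cancel_left _ hp.pos]
      omega
    · intro a ha
      simp only [Finset.mem_filter, Finset.mem_range] at ha
      obtain ⟨han, m, hm⟩ := ha
      have hm1 : 1 ≤ m := by nlinarith [hp.pos]
      have h1 : (a+1)/p = m := by rw [hm]; exact Nat.mul_div_cancel_left m hp.pos
      rw [h1]
      have h5 : m - 1 + 1 = m := by omega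
      rw [h5, ← hm]
  have hc : (∏ i ∈ Finset.range (n/p), (p * (i+1))) = p ^ (n/p) * (n/p)! := by
    rw [Finset.prod_mul_distrib, Finset.prod_const, Finset.card_range,
      Finset.prod_range_add_one_eq_factorial]
  rw [← h0, hb, hc, Wp]
  ring

lemma pow_padic_mul_Upart {p : ℕ} (hp : p.Prime) (n : ℕ) :
    n ! = p ^ (padicValNat p (n !)) * Upart p n :=
  (Nat.mul_div_cancel' pow_padicValNat_dvd).symm

lemma padicValNat_factorial_div {p : ℕ} (hp : p.Prime) (n : ℕ) :
    padicValNat p (n !) = n / p + padicValNat p ((n/p)!) := by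
  haveI : Fact p.Prime := ⟨hp⟩
  conv_lhs => rw [← Nat.div_add_mod n p]
  rw [padicValNat_factorial_mul_add (n/p) (Nat.mod_lt n hp.pos), padicValNat_factorial_mul]
  omega

lemma Upart_step {p : ℕ} (hp : p.Prime) (n : ℕ) :
    Upart p n = Wp p n * Upart p (n / p) := by
  have key : p ^ (padicValNat p (n !)) * Upart p n
      = p ^ (padicValNat p (n !)) * (Wp p n * Upart p (n/p)) := by
    conv_lhs => rw [← pow_padic_mul_Upart hp n]
    conv_rhs => rw [padicValNat_factorial_div hp n, pow_add]
    conv_lhs => rw [factorial_split hp n, pow_padic_mul_Upart hp (n/p)]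
    ring
  exact Nat.eq_of_mul_eq_mul_left (pow_pos hp.pos _) key

lemma not_dvd_Upart {p : ℕ} (hp : p.Prime) (n : ℕ) : ¬ p ∣ Upart p n := by
  haveI : Fact p.Prime := ⟨hp⟩
  rintro ⟨c, hc⟩
  refine pow_succ_padicValNat_not_dvd (Nat.factorial_ne_zero n) (p := p) ⟨c, ?_⟩
  conv_lhs => rw [pow_padic_mul_Upart hp n, hc]
  ring

lemma not_dvd_Wp {p : ℕ} (hp : p.Prime) (n : ℕ) : ¬ p ∣ Wp p n := by
  intro h
  rw [Wp, hp.prime.dvd_finset_prod_iff _] at h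
  obtain ⟨j, hj, hdvd⟩ := h
  simp only [Finset.mem_filter] at hj
  exact hj.2 hdvd

lemma pow_mod_of_pow_eq_one {M : Type*} [Monoid M] {x : M} {e : ℕ} (h : x ^ e = 1) (k : ℕ) :
    x ^ k = x ^ (k % e) := by
  conv_lhs => rw [← Nat.div_add_mod k e, pow_add, pow_mul, h, one_pow, one_mul]

lemma prod_range_zmod {q : ℕ} [NeZero q] {M : Type*} [CommMonoid M] (F : ZMod q → M) :
    ∏ j ∈ Finset.range q, F (j : ZMod q) = ∏ x : ZMod q, F x := by
  have hq : 0 < q := Nat.pos_of_ne_zero (NeZero.ne q)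
  apply Finset.prod_nbij (i := fun j => ((j : ℕ) : ZMod q)) (f := fun j => F ((j : ℕ) : ZMod q)) (g := F)
  · intro a _; exact Finset.mem_univ _
  · intro j hj k hk hjk
    simp only [Finset.coe_range, Set.mem_Iio] at hj hk
    have := congrArg ZMod.val hjk
    rwa [ZMod.val_natCast, ZMod.val_natCast, Nat.mod_eq_of_lt hj, Nat.mod_eq_of_lt hk] at this
  · intro x _
    refine ⟨x.val, ?_, ?_⟩
    · simp only [Finset.coe_range, Set.mem_Iio]; exact ZMod.val_lt x
    · exact ZMod.natCast_rightInverse x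
  · intro a _; rfl

lemma Wp_cast {p q : ℕ} (n : ℕ) :
    ((Wp p n : ℕ) : ZMod q) = ∏ j ∈ Finset.range n,
      (if p ∣ (j+1) then (1 : ZMod q) else ((j+1 : ℕ) : ZMod q)) := by
  rw [Wp, Nat.cast_prod, Finset.prod_filter]
  apply Finset.prod_congr rfl
  intro j _
  by_cases h : p ∣ (j+1) <;> simp [h]

lemma cast_ite_term {p q : ℕ} (hq : 0 < q) (hpq : p ∣ q) (m : ℕ) :
    (if p ∣ m then (1 : ZMod q) else ((m : ℕ) : ZMod q))
      = (fun x : ZMod q => if p ∣ x.val then (1 : ZMod q) else x) ((m : ℕ) : ZMod q) := by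
  haveI : NeZero q := ⟨hq.ne'⟩
  have hmod : p ∣ m ↔ p ∣ (m % q) := by
    constructor
    · intro h; exact (Nat.dvd_mod_iff hpq).mpr h
    · intro h; exact (Nat.dvd_mod_iff hpq).mp h
  simp only [ZMod.val_natCast]
  by_cases h : p ∣ m
  · rw [if_pos h, if_pos (hmod.mp h)]
  · rw [if_neg h, if_neg (fun hh => h (hmod.mpr hh))]

lemma window_prod {p q : ℕ} (hq : 0 < q) (hpq : p ∣ q) (n : ℕ) :
    (∏ j ∈ Finset.range q, (if p ∣ (n+j+1) then (1 : ZMod q) else ((n+j+1 : ℕ) : ZMod q)))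
      = ((Wp p q : ℕ) : ZMod q) := by
  haveI : NeZero q := ⟨hq.ne'⟩
  set H : ZMod q → ZMod q := fun x => if p ∣ x.val then (1 : ZMod q) else x with hH
  have key : ∀ c : ℕ, (∏ j ∈ Finset.range q,
      (if p ∣ (c+j+1) then (1 : ZMod q) else ((c+j+1 : ℕ) : ZMod q))) = ∏ x : ZMod q, H x := by
    intro c
    have step1 : ∀ j : ℕ, (if p ∣ (c+j+1) then (1 : ZMod q) else ((c+j+1 : ℕ) : ZMod q))
        = H (((c+1 : ℕ) : ZMod q) + (j : ZMod q)) := by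
      intro j
      rw [cast_ite_term hq hpq (c+j+1)]
      congr 1
      push_cast
      ring
    calc (∏ j ∈ Finset.range q, (if p ∣ (c+j+1) then (1 : ZMod q) else ((c+j+1 : ℕ) : ZMod q)))
        = ∏ j ∈ Finset.range q, H (((c+1 : ℕ) : ZMod q) + (j : ZMod q)) :=
          Finset.prod_congr rfl (fun j _ => step1 j)
      _ = ∏ x : ZMod q, H (((c+1 : ℕ) : ZMod q) + x) := prod_range_zmod (fun x => H (((c+1:ℕ) : ZMod q) + x))
      _ = ∏ x : ZMod q, H x := Fintype.prod_bijective _ (Equiv.addLeft _).bijective _ _ (fun x => rfl)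
  have h2 : ((Wp p q : ℕ) : ZMod q) = ∏ x : ZMod q, H x := by
    rw [Wp_cast]
    have := key 0
    simpa using this
  rw [key n, h2]

lemma Wp_mod {p q : ℕ} (hq : 0 < q) (hpq : p ∣ q) (n : ℕ) :
    ((Wp p n : ℕ) : ZMod q)
      = ((Wp p (n % q) : ℕ) : ZMod q) * ((Wp p q : ℕ) : ZMod q) ^ (n / q) := by
  have step : ∀ m : ℕ, ((Wp p (m + q) : ℕ) : ZMod q)
      = ((Wp p m : ℕ) : ZMod q) * ((Wp p q : ℕ) : ZMod q) := by
    intro m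
    rw [Wp_cast, Finset.prod_range_add, ← Wp_cast]
    congr 1
    rw [← window_prod hq hpq m]
  have main : ∀ t s : ℕ, ((Wp p (s + q * t) : ℕ) : ZMod q)
      = ((Wp p s : ℕ) : ZMod q) * ((Wp p q : ℕ) : ZMod q) ^ t := by
    intro t
    induction t with
    | zero => intro s; simp
    | succ t ih =>
      intro s
      have : s + q * (t+1) = (s + q * t) + q := by ring
      rw [this, step, ih, pow_succ]
      ring
  have := main (n / q) (n % q)
  rwa [Nat.mod_add_div n q] at this
lemma prod_dvd_of_pairwise_coprime {ι : Type*} (s : Finset ι) (f : ι → ℕ) (m : ℕ)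
    (hcop : ∀ i ∈ s, ∀ j ∈ s, i ≠ j → Nat.Coprime (f i) (f j))
    (hdvd : ∀ i ∈ s, f i ∣ m) : (∏ i ∈ s, f i) ∣ m := by
  classical
  induction s using Finset.induction_on with
  | empty => simpa using one_dvd m
  | @insert a s' hnotmem ih =>
    rw [Finset.prod_insert hnotmem]
    have hcop' : Nat.Coprime (f a) (∏ i ∈ s', f i) := by
      apply Nat.Coprime.prod_right
      intro j hj
      exact hcop a (Finset.mem_insert_self a s') j (Finset.mem_insert_of_mem hj)
        (fun h => hnotmem (h ▸ hj))
    exact Nat.Coprime.mul_dvd_of_dvd_of_dvd hcop'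
      (hdvd a (Finset.mem_insert_self a s'))
      (ih (fun i hi j hj hij => hcop i (Finset.mem_insert_of_mem hi) j
        (Finset.mem_insert_of_mem hj) hij)
        (fun i hi => hdvd i (Finset.mem_insert_of_mem hi)))

lemma coprime_pp {p1 p2 a1 a2 : ℕ} (h1 : p1.Prime) (h2 : p2.Prime) (hne : p1 ≠ p2) :
    Nat.Coprime (p1 ^ a1) (p2 ^ a2) :=
  Nat.Coprime.pow a1 a2 ((Nat.coprime_primes h1 h2).mpr hne)

lemma pow_b_dvd_iff {r : ℕ} (p a : Fin r → ℕ) (hp : ∀ i, (p i).Prime)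
    (hpinj : Function.Injective p) {b : ℕ} (hfac : b = ∏ i, p i ^ a i)
    {m : ℕ} (hm : m ≠ 0) (t : ℕ) :
    b ^ t ∣ m ↔ ∀ i, a i * t ≤ padicValNat (p i) m := by
  subst hfac
  rw [← Finset.prod_pow]
  constructor
  · intro h i
    have h1 : (p i) ^ (a i * t) ∣ m := by
      refine dvd_trans ?_ h
      rw [pow_mul]
      exact Finset.dvd_prod_of_mem _ (Finset.mem_univ i)
    rw [prime_pow_dvd_iff (hp i) hm] at h1
    exact h1
  · intro h
    apply prod_dvd_of_pairwise_coprime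
    · intro i _ j _ hij
      exact Nat.Coprime.pow t t (coprime_pp (hp i) (hp j) (fun hh => hij (hpinj hh)))
    · intro i _
      rw [← pow_mul, prime_pow_dvd_iff (hp i) hm]
      exact h i

lemma eventual_bound_one {p0 pi a0 ai : ℕ} (hp0 : p0.Prime) (hpi : pi.Prime)
    (ha0 : 0 < a0) (hai : 0 < ai) (hlt : ai * (pi - 1) < a0 * (p0 - 1)) :
    ∃ N, ∀ n ≥ N, ai * (padicValNat p0 (n !) / a0 + 2) ≤ padicValNat pi (n !) := by
  set B := ai * (pi - 1) with hB
  have hp0two := hp0.two_le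
  have hpitwo := hpi.two_le
  have hBpos : 0 < B := Nat.mul_pos hai (by omega)
  set C := 2 * B + pi with hC
  obtain ⟨N, hN⟩ := exists_log_bound C (B + 1) (by omega)
  refine ⟨N, fun n hn => ?_⟩
  have hleg0 := legendre hp0 n
  have hlegi := legendre hpi n
  set V0 := padicValNat p0 (n !) with hV0
  set Vi := padicValNat pi (n !) with hVi
  set D := n / (B + 1) with hD
  have h1 : V0 / a0 ≤ D := by
    have hV0le' : V0 ≤ n / (p0 - 1) := by
      rw [Nat.le_div_iff_mul_le (by omega : 0 < p0 - 1)]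
      calc V0 * (p0 - 1) = (p0 - 1) * V0 := mul_comm _ _
        _ = n - digSum p0 n := hleg0
        _ ≤ n := Nat.sub_le _ _
    calc V0 / a0 ≤ (n / (p0 - 1)) / a0 := Nat.div_le_div_right hV0le'
      _ = n / ((p0 - 1) * a0) := Nat.div_div_eq_div_mul n _ _
      _ ≤ n / (B + 1) := Nat.div_le_div_left (by nlinarith) (by omega)
  have h3 : 2 * B + digSum pi n ≤ D := by
    have hlog : digSum pi n ≤ (pi - 1) * (Nat.log 2 n + 1) := by
      calc digSum pi n ≤ (pi - 1) * (Nat.log pi n + 1) := digSum_le_log (by omega) n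
        _ ≤ (pi - 1) * (Nat.log 2 n + 1) := by
            have hanti := Nat.log_anti_left (b := pi) (c := 2) (by omega) (by omega) (n := n)
            exact Nat.mul_le_mul_left _ (by omega)
    calc 2 * B + digSum pi n ≤ 2 * B + (pi - 1) * (Nat.log 2 n + 1) :=
          Nat.add_le_add_left hlog _
      _ ≤ C * (Nat.log 2 n + 2) := by
          have e1 : (pi - 1) * (Nat.log 2 n + 1) ≤ pi * (Nat.log 2 n + 2) :=
            Nat.mul_le_mul (by omega) (by omega)
          have e2 : 2 * B ≤ 2 * B * (Nat.log 2 n + 2) :=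
            Nat.le_mul_of_pos_right _ (by omega)
          calc 2 * B + (pi - 1) * (Nat.log 2 n + 1)
              ≤ 2 * B * (Nat.log 2 n + 2) + pi * (Nat.log 2 n + 2) := Nat.add_le_add e2 e1
            _ = C * (Nat.log 2 n + 2) := by rw [hC]; ring
      _ ≤ D := hN n hn
  have key' : (pi - 1) * (ai * (D + 2)) ≤ (pi - 1) * Vi := by
    rw [hlegi]
    have expand : (pi - 1) * (ai * (D + 2)) = B * D + 2 * B := by rw [hB]; ring
    rw [expand]
    apply Nat.le_sub_of_add_le
    have hfl : D * (B + 1) ≤ n := Nat.div_mul_le_self n (B + 1)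
    nlinarith [h3, hfl]
  have k1 : ai * (V0 / a0 + 2) ≤ ai * (D + 2) :=
    Nat.mul_le_mul_left _ (Nat.add_le_add_right h1 2)
  exact k1.trans (Nat.le_of_mul_le_mul_left key' (by omega))
lemma isUnit_cast_pow_prime {p α x : ℕ} (hp : p.Prime) (h : ¬ p ∣ x) :
    IsUnit ((x : ℕ) : ZMod (p ^ α)) := by
  rw [ZMod.isUnit_iff_coprime]
  exact Nat.Coprime.pow_right α (Nat.coprime_comm.mp (hp.coprime_iff_not_dvd.mpr h))

lemma pow_totient_eq_one' {q : ℕ} {x : ZMod q} (h : IsUnit x) : x ^ q.totient = 1 := by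
  obtain ⟨u, rfl⟩ := h
  rw [← Units.val_pow_eq_pow_val, ZMod.pow_totient u, Units.val_one]

lemma main_valuation {r : ℕ} (p a : Fin r → ℕ) (hp : ∀ i, (p i).Prime)
    (hpinj : Function.Injective p) (hr : 0 < r) {b : ℕ} (hfac : b = ∏ i, p i ^ a i)
    (ha : ∀ i, 0 < a i) (n : ℕ)
    (hbound : ∀ i, i ≠ (⟨0, hr⟩ : Fin r) →
      a i * (padicValNat (p ⟨0, hr⟩) (n !) / a ⟨0, hr⟩ + 2) ≤ padicValNat (p i) (n !)) :
    padicValNat b (n !) = padicValNat (p ⟨0, hr⟩) (n !) / a ⟨0, hr⟩ ∧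
    (∏ i ∈ Finset.univ.erase (⟨0, hr⟩ : Fin r), p i ^ a i) ∣
      (n ! / b ^ (padicValNat (p ⟨0, hr⟩) (n !) / a ⟨0, hr⟩)) := by
  set i0 : Fin r := ⟨0, hr⟩
  set V0 := padicValNat (p i0) (n !) with hV0def
  set t := V0 / a i0 with ht
  have hfacne : n ! ≠ 0 := Nat.factorial_ne_zero n
  have hb1 : 1 < b := by
    have hbpos : 0 < b := by
      rw [hfac]; exact Finset.prod_pos (fun i _ => pow_pos (hp i).pos _)
    have hdvd : p i0 ^ a i0 ∣ b := hfac ▸ Finset.dvd_prod_of_mem _ (Finset.mem_univ i0)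
    have h2 : 1 < p i0 ^ a i0 := Nat.one_lt_pow (ha i0).ne' (hp i0).one_lt
    have := Nat.le_of_dvd hbpos hdvd
    omega
  have hdvd_t : b ^ t ∣ n ! := by
    rw [pow_b_dvd_iff p a hp hpinj hfac hfacne]
    intro i
    by_cases hi : i = i0
    · rw [hi]
      calc a i0 * t ≤ a i0 * t + V0 % a i0 := Nat.le_add_right _ _
        _ = V0 := Nat.div_add_mod V0 (a i0)
    · calc a i * t ≤ a i * (t + 2) := Nat.mul_le_mul_left _ (by omega)
        _ ≤ padicValNat (p i) (n !) := hbound i hi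
  have hnot : ¬ b ^ (t + 1) ∣ n ! := by
    intro h
    have h1 := (pow_b_dvd_iff p a hp hpinj hfac hfacne (t+1)).mp h i0
    have h2 : t + 1 ≤ V0 / a i0 := by
      rw [Nat.le_div_iff_mul_le (ha i0), mul_comm]
      exact h1
    omega
  constructor
  · exact padicValNat_eq_of_dvd_not_dvd hb1 (Nat.factorial_pos n) hdvd_t hnot
  · apply prod_dvd_of_pairwise_coprime
    · intro i hi j hj hij
      exact coprime_pp (hp i) (hp j) (fun hh => hij (hpinj hh))
    · intro i hi
      have hine : i ≠ i0 := fun h => (Finset.mem_erase.mp hi).1 h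
      rw [Nat.dvd_div_iff_mul_dvd hdvd_t, mul_comm]
      -- b ^ t = (p i ^ a i) ^ t * D
      have hsplit : b ^ t = (p i ^ a i) ^ t * ∏ j ∈ Finset.univ.erase i, (p j ^ a j) ^ t := by
        rw [hfac, ← Finset.prod_pow]
        exact (Finset.mul_prod_erase Finset.univ _ (Finset.mem_univ i)).symm
      rw [hsplit, ← mul_assoc, ← _root_.pow_succ']
      apply Nat.Coprime.mul_dvd_of_dvd_of_dvd
      · apply Nat.Coprime.prod_right
        intro j hj
        exact Nat.Coprime.pow (t+1) t
          (coprime_pp (hp i) (hp j) (fun hh => ((Finset.mem_erase.mp hj).1 (hpinj hh).symm)))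
      · rw [← pow_mul, prime_pow_dvd_iff (hp i) hfacne]
        calc a i * (t + 1) ≤ a i * (t + 2) := Nat.mul_le_mul_left _ (by omega)
          _ ≤ padicValNat (p i) (n !) := hbound i hine
      · calc (∏ j ∈ Finset.univ.erase i, (p j ^ a j) ^ t)
            ∣ ∏ j, (p j ^ a j) ^ t :=
              Finset.prod_dvd_prod_of_subset _ _ _ (Finset.subset_univ _)
          _ = b ^ t := by rw [hfac, ← Finset.prod_pow]
          _ ∣ n ! := hdvd_t

lemma autoRun_succ {Q : Type} (k : ℕ) (hk : 1 < k) (ρ : Q → Fin k → Q) (q₀ : Q)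
    (n : ℕ) (hn : n ≠ 0) :
    autoRun k ρ q₀ n = ρ (autoRun k ρ q₀ (n / k)) ⟨n % k, Nat.mod_lt n (by omega)⟩ := by
  unfold autoRun
  rw [Nat.digits_def' hk (Nat.pos_of_ne_zero hn), List.reverse_cons, List.foldl_append]
  simp only [List.foldl_cons, List.foldl_nil]
  rw [dif_pos (Nat.mod_lt n (by omega : 0 < k))]

lemma key_identity {p0 a0 c b : ℕ} (hp0 : p0.Prime) (hb : b = p0 ^ a0 * c) (n t : ℕ)
    (ht : b ^ t ∣ n !) (htt : t = padicValNat p0 (n !) / a0) :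
    c ^ t * (n ! / b ^ t) = p0 ^ (padicValNat p0 (n !) % a0) * Upart p0 n := by
  set V := padicValNat p0 (n !) with hV
  have hVsplit : a0 * t + V % a0 = V := by rw [htt]; exact Nat.div_add_mod V a0
  have h1 : n ! = b ^ t * (n ! / b ^ t) := (Nat.mul_div_cancel' ht).symm
  have h2 : n ! = p0 ^ V * Upart p0 n := pow_padic_mul_Upart hp0 n
  have h3 : p0 ^ (a0 * t) * (c ^ t * (n ! / b ^ t))
      = p0 ^ (a0 * t) * (p0 ^ (V % a0) * Upart p0 n) := by
    calc p0 ^ (a0 * t) * (c ^ t * (n ! / b ^ t))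
        = (p0 ^ a0 * c) ^ t * (n ! / b ^ t) := by rw [mul_pow, pow_mul]; ring
      _ = n ! := by rw [← hb, ← h1]
      _ = p0 ^ V * Upart p0 n := h2
      _ = p0 ^ (a0 * t) * (p0 ^ (V % a0) * Upart p0 n) := by
          conv_lhs => rw [← hVsplit, pow_add]
          ring
  exact Nat.eq_of_mul_eq_mul_left (pow_pos hp0.pos _) h3

lemma crt_output {q c b : ℕ} (hb : b = q * c) (hco : Nat.Coprime q c)
    (m z : ℕ) (hz : z = m % q) (hcm : c ∣ m) :
    m % b = (Nat.chineseRemainder hco z 0 : ℕ) % b := by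
  obtain ⟨hs1, hs2⟩ := (Nat.chineseRemainder hco z 0).2
  have h1 : (Nat.chineseRemainder hco z 0 : ℕ) ≡ m [MOD q] := by
    refine hs1.trans ?_
    rw [hz]
    exact Nat.mod_modEq m q
  have h2 : (Nat.chineseRemainder hco z 0 : ℕ) ≡ m [MOD c] := by
    refine hs2.trans ?_
    exact ((Nat.modEq_zero_iff_dvd).mpr hcm).symm
  have := (Nat.modEq_and_modEq_iff_modEq_mul hco).mp ⟨h1, h2⟩
  rw [← hb] at this
  exact this.symm

/-- Let `b = p 0 ^ a 0 * p 1 ^ a 1 * ⋯ * p (r-1) ^ a (r-1)` with `r ≥ 2`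
distinct primes, ordered so that `a 0 * (p 0 - 1) > a i * (p i - 1)` for all
`i ≠ 0`.  Then the sequence of last nonzero digits of `n !` in base `b` is
`p 0`-automatic. -/
theorem lnz_factorial_automatic_of_strict_max (b r : ℕ) (hb : 2 ≤ b) (hr : 2 ≤ r)
    (p a : Fin r → ℕ) (hp : ∀ i, (p i).Prime) (hpinj : Function.Injective p)
    (ha : ∀ i, 0 < a i) (hfac : b = ∏ i, p i ^ a i)
    (hmax : ∀ i : Fin r, i ≠ ⟨0, by omega⟩ →
      a i * (p i - 1) < a ⟨0, by omega⟩ * (p ⟨0, by omega⟩ - 1)) :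
    IsAutomatic (p ⟨0, by omega⟩) (fun n => lnz b (Nat.factorial n)) := by
  have hr0 : 0 < r := by omega
  set i0 : Fin r := ⟨0, by omega⟩ with hi0def
  have hp0 : (p i0).Prime := hp i0
  set p0 := p i0 with hp0def
  set a0 := a i0 with ha0def
  have hp02 : 2 ≤ p0 := hp0.two_le
  have ha0 : 0 < a0 := ha i0
  set q : ℕ := p0 ^ a0 with hqdef
  have hq1 : 1 < q := Nat.one_lt_pow ha0.ne' hp0.one_lt
  set c : ℕ := ∏ i ∈ Finset.univ.erase i0, p i ^ a i with hcdef
  have hcpos : 0 < c := Finset.prod_pos (fun i _ => pow_pos (hp i).pos _)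
  have hbqc : b = q * c := by
    rw [hfac, hqdef, hcdef]
    exact (Finset.mul_prod_erase Finset.univ _ (Finset.mem_univ i0)).symm
  have hco : Nat.Coprime q c := by
    apply Nat.Coprime.prod_right
    intro j hj
    exact coprime_pp hp0 (hp j) (fun hh => (Finset.mem_erase.mp hj).1 (hpinj hh).symm)
  have hev : ∀ i : Fin r, ∃ N, ∀ n ≥ N, i ≠ i0 →
      a i * (padicValNat p0 (n !) / a0 + 2) ≤ padicValNat (p i) (n !) := by
    intro i
    by_cases hi : i = i0
    · exact ⟨0, fun n _ hcon => absurd hi hcon⟩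
    · obtain ⟨N, hN⟩ := eventual_bound_one hp0 (hp i) ha0 (ha i) (hmax i hi)
      exact ⟨N, fun n hn _ => hN n hn⟩
  choose Nf hNf using hev
  set N : ℕ := Finset.univ.sup Nf with hNdef
  have hNle : ∀ i, Nf i ≤ N := fun i => Finset.le_sup (Finset.mem_univ i)
  have hgood : ∀ n, N ≤ n → ∀ i, i ≠ i0 →
      a i * (padicValNat p0 (n !) / a0 + 2) ≤ padicValNat (p i) (n !) :=
    fun n hn i hi => hNf i n (le_trans (hNle i) hn) hi
  set e : ℕ := Nat.totient q with hedef
  have hepos : 0 < e := Nat.totient_pos.mpr (by omega)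
  set E : ℕ := a0 * e with hEdef
  have hEpos : 0 < E := Nat.mul_pos ha0 hepos
  set M : ℕ := (q * e) * E with hMdef
  have hMpos : 0 < M := Nat.mul_pos (Nat.mul_pos (by omega) hepos) hEpos
  haveI : NeZero M := ⟨hMpos.ne'⟩
  haveI : NeZero E := ⟨hEpos.ne'⟩
  haveI : NeZero q := ⟨by omega⟩
  have hEM : E ∣ M := dvd_mul_left E (q * e)
  have hp0q : p0 ∣ q := dvd_pow_self p0 ha0.ne'
  have hqpos : 0 < q := by omega
  set Gz : ZMod q := ((Wp p0 q : ℕ) : ZMod q) with hGzdef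
  have hGzunit : IsUnit Gz := isUnit_cast_pow_prime hp0 (not_dvd_Wp hp0 q)
  have hGze : Gz ^ e = 1 := pow_totient_eq_one' hGzunit
  set cu : (ZMod q)ˣ := ZMod.unitOfCoprime c hco.symm with hcudef
  have hcue : cu⁻¹ ^ e = 1 := ZMod.pow_totient cu⁻¹
  set Q : Type := Fin (N+1) × ZMod M × ZMod E × ZMod q with hQdef
  set step : Q → Fin p0 → Q := fun s d =>
    (⟨min (s.1.val * p0 + d.val) N, by omega⟩,
     s.2.1 * (p0 : ZMod M) + (d.val : ZMod M),
     (ZMod.castHom hEM (ZMod E)) s.2.1 + s.2.2.1,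
     s.2.2.2 * (((Wp p0 ((((s.2.1).val * p0 + d.val) % (q * e)) % q) : ℕ) : ZMod q)
        * Gz ^ ((((s.2.1).val * p0 + d.val) % (q * e)) / q))) with hstepdef
  set q₀ : Q := (⟨0, by omega⟩, 0, 0, 1) with hq0def
  set out : Q → ℕ := fun s =>
    if s.1.val < N then lnz b (Nat.factorial s.1.val)
    else
      (Nat.chineseRemainder hco
        (((p0 : ZMod q) ^ (s.2.2.1.val % a0)
          * ((cu⁻¹ ^ (s.2.2.1.val / a0) : (ZMod q)ˣ) : ZMod q)
          * s.2.2.2).val) 0 : ℕ) % b with houtdef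
  refine ⟨Q, (inferInstance : Finite (Fin (N+1) × ZMod M × ZMod E × ZMod q)),
    step, q₀, out, ?_⟩
  show ∀ n : ℕ, lnz b (n !) = out (autoRun p0 step q₀ n)
  have hinv : ∀ n : ℕ, autoRun p0 step q₀ n =
      ((⟨min n N, by omega⟩ : Fin (N+1)), (n : ZMod M),
        ((padicValNat p0 (n !) : ℕ) : ZMod E), ((Upart p0 n : ℕ) : ZMod q)) := by
    intro n
    induction n using Nat.strong_induction_on with
    | _ n ih =>
      rcases eq_or_ne n 0 with rfl | hn
      · have h0 : autoRun p0 step q₀ 0 = q₀ := by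
          unfold autoRun
          simp
        rw [h0, hq0def]
        refine Prod.ext (Fin.ext ?_) (Prod.ext ?_ (Prod.ext ?_ ?_))
        · simp
        · simp
        · show (0 : ZMod E) = ((padicValNat p0 (Nat.factorial 0) : ℕ) : ZMod E)
          simp [Nat.factorial_zero]
        · show (1 : ZMod q) = ((Upart p0 0 : ℕ) : ZMod q)
          rw [Upart_zero]; simp
      · set k := n / p0 with hkdef
        set d := n % p0 with hddef
        have hd : d < p0 := Nat.mod_lt n hp0.pos
        have hx : p0 * k + d = n := Nat.div_add_mod n p0
        have hx' : k * p0 + d = n := by rw [mul_comm]; exact hx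
        rw [autoRun_succ p0 hp0.one_lt step q₀ n hn,
          ih k (Nat.div_lt_self (Nat.pos_of_ne_zero hn) hp0.one_lt)]
        simp only [hstepdef]
        refine Prod.ext (Fin.ext ?_) (Prod.ext ?_ (Prod.ext ?_ ?_))
        · show min (min k N * p0 + d) N = min n N
          rcases le_or_gt k N with hk | hk
          · rw [Nat.min_eq_left hk, hx']
          · rw [Nat.min_eq_right hk.le]
            have h1 : N ≤ N * p0 + d :=
              le_trans (Nat.le_mul_of_pos_right N hp0.pos) (Nat.le_add_right _ _)
            have h2 : N ≤ n := by
              have h3 : k ≤ p0 * k := Nat.le_mul_of_pos_left k hp0.pos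
              linarith [hx]
            rw [Nat.min_eq_right h1, Nat.min_eq_right h2]
        · show (k : ZMod M) * (p0 : ZMod M) + (d : ZMod M) = (n : ZMod M)
          rw [← hx']
          push_cast
          ring
        · show (ZMod.castHom hEM (ZMod E)) ((k : ZMod M))
              + ((padicValNat p0 (k !) : ℕ) : ZMod E)
            = ((padicValNat p0 (n !) : ℕ) : ZMod E)
          rw [map_natCast]
          have hvrec : padicValNat p0 (n !) = k + padicValNat p0 (k !) := by
            conv_lhs => rw [← hx]
            exact padicValNat_factorial_step hp0 k d hd
          rw [hvrec]
          push_cast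
          ring
        · show ((Upart p0 k : ℕ) : ZMod q)
              * (((Wp p0 (((((k : ZMod M)).val * p0 + d) % (q * e)) % q) : ℕ) : ZMod q)
                * Gz ^ (((((k : ZMod M)).val * p0 + d) % (q * e)) / q))
            = ((Upart p0 n : ℕ) : ZMod q)
          rw [ZMod.val_natCast]
          have hy : ((k % M) * p0 + d) % (q * e) = n % (q * e) := by
            have hmod : (k % M) * p0 + d ≡ k * p0 + d [MOD q * e] :=
              Nat.ModEq.add_right d
                (Nat.ModEq.mul_right p0 ((Nat.mod_modEq k M).of_dvd (dvd_mul_right (q*e) E)))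
            have : ((k % M) * p0 + d) % (q * e) = (k * p0 + d) % (q * e) := hmod
            rw [this, hx']
          rw [hy]
          have hW : ((Wp p0 n : ℕ) : ZMod q)
              = ((Wp p0 ((n % (q * e)) % q) : ℕ) : ZMod q) * Gz ^ ((n % (q * e)) / q) := by
            rw [Nat.mod_mod_of_dvd n (dvd_mul_right q e),
              Nat.mod_mul_right_div_self n q e,
              ← pow_mod_of_pow_eq_one hGze (n / q)]
            exact Wp_mod hqpos hp0q n
          rw [← hW]
          have hustep : Upart p0 n = Wp p0 n * Upart p0 k := by
            rw [Upart_step hp0 n, hkdef]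
          rw [hustep]
          push_cast
          ring
  intro n
  rw [hinv n]
  simp only [houtdef]
  by_cases hcase : n < N
  · rw [if_pos (by simpa using hcase)]
    show lnz b (n !) = lnz b ((min n N) !)
    rw [Nat.min_eq_left hcase.le]
  · have hNn : N ≤ n := not_lt.mp hcase
    rw [if_neg (by simp [Nat.min_eq_right hNn])]
    obtain ⟨hvb, hcdvd⟩ := main_valuation p a hp hpinj hr0 hfac ha n (hgood n hNn)
    set Vn := padicValNat p0 (n !) with hVndef
    set t := Vn / a0 with htdef
    set m := n ! / b ^ t with hmdef
    have hvb' : padicValNat b (n !) = t := hvb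
    have hcm : c ∣ m := hcdvd
    have hbt : b ^ t ∣ n ! := by rw [← hvb']; exact pow_padicValNat_dvd
    have hkey : c ^ t * m = p0 ^ (Vn % a0) * Upart p0 n :=
      key_identity hp0 hbqc n t hbt rfl
    have hkeyq : (c : ZMod q) ^ t * (m : ZMod q)
        = (p0 : ZMod q) ^ (Vn % a0) * ((Upart p0 n : ℕ) : ZMod q) := by
      exact_mod_cast congrArg (fun x : ℕ => (x : ZMod q)) hkey
    have hcu_val : ((cu : (ZMod q)ˣ) : ZMod q) = (c : ZMod q) :=
      ZMod.coe_unitOfCoprime c hco.symm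
    have hm_eq : (m : ZMod q)
        = ((cu⁻¹ ^ t : (ZMod q)ˣ) : ZMod q)
          * ((p0 : ZMod q) ^ (Vn % a0) * ((Upart p0 n : ℕ) : ZMod q)) := by
      rw [← hkeyq, ← mul_assoc]
      have hone : ((cu⁻¹ ^ t : (ZMod q)ˣ) : ZMod q) * (c : ZMod q) ^ t = 1 := by
        rw [← hcu_val, ← Units.val_pow_eq_pow_val, ← Units.val_mul, ← mul_pow,
          inv_mul_cancel, one_pow, Units.val_one]
      rw [hone, one_mul]
    -- match exponents with state values
    have hval1 : ((Vn : ℕ) : ZMod E).val = Vn % E := ZMod.val_natCast E Vn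
    have hexp1 : ((Vn % E) % a0) = Vn % a0 := by
      rw [hEdef]
      exact Nat.mod_mod_of_dvd Vn (dvd_mul_right a0 e)
    have hexp2 : cu⁻¹ ^ ((Vn % E) / a0) = cu⁻¹ ^ t := by
      have h1 : (Vn % E) / a0 = t % e := by
        rw [hEdef, htdef, ← Nat.mod_mul_right_div_self Vn a0 e]
      rw [h1, ← pow_mod_of_pow_eq_one hcue t]
    have hZ : (p0 : ZMod q) ^ (((Vn : ℕ) : ZMod E).val % a0)
          * ((cu⁻¹ ^ (((Vn : ℕ) : ZMod E).val / a0) : (ZMod q)ˣ) : ZMod q)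
          * ((Upart p0 n : ℕ) : ZMod q) = (m : ZMod q) := by
      rw [hval1, hexp1, hexp2, hm_eq]
      ring
    show lnz b (n !)
        = (Nat.chineseRemainder hco
            (((p0 : ZMod q) ^ (((Vn : ℕ) : ZMod E).val % a0)
              * ((cu⁻¹ ^ (((Vn : ℕ) : ZMod E).val / a0) : (ZMod q)ˣ) : ZMod q)
              * ((Upart p0 n : ℕ) : ZMod q)).val) 0 : ℕ) % b
    rw [hZ, ZMod.val_natCast]
    calc lnz b (n !) = m % b := by rw [lnz, hvb']
      _ = (Nat.chineseRemainder hco (m % q) 0 : ℕ) % b :=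
          crt_output hbqc hco m (m % q) rfl hcm
end

section
/- Let P be a non-empty finite set of prime numbers and let p be its largest element. Let a > 0 and k > 1 be integers. Then there exists a positive integer a' such that max_{q∈P} s_q(a') = s_p(a') and the base-k digit string of a is a prefix of the base-k digit string of a'. -/
lemma key_pow_lt (q p : ℕ) (hq : 2 ≤ q) (hqp : q < p) : p ^ (q-1) < q ^ (p-1) := by
  have hx : (2:ℝ) ≤ (q:ℝ) := by exact_mod_cast hq
  have hy : (q:ℝ) < (p:ℝ) := by exact_mod_cast hqp
  have hx0 : (0:ℝ) < q := by linarith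
  have hy0 : (0:ℝ) < p := by linarith
  have h1 : Real.log ((p:ℝ)/q) ≤ (p:ℝ)/q - 1 := Real.log_le_sub_one_of_pos (by positivity)
  have h2 : Real.log (1/(q:ℝ)) < 1/(q:ℝ) - 1 :=
    Real.log_lt_sub_one_of_pos (by positivity) (by
      rw [ne_eq, div_eq_one_iff_eq (by positivity)]
      intro h; linarith)
  rw [Real.log_div (by positivity) (by positivity)] at h1
  rw [Real.log_div (by norm_num) (by positivity), Real.log_one] at h2
  have hmain : ((q:ℝ)-1) * Real.log p < ((p:ℝ)-1) * Real.log q := by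
    have e1 : (q:ℝ) * (Real.log p - Real.log q) ≤ p - q := by
      calc (q:ℝ) * (Real.log p - Real.log q) ≤ q * ((p:ℝ)/q - 1) :=
            mul_le_mul_of_nonneg_left h1 (le_of_lt hx0)
        _ = p - q := by field_simp
    have e2 : (q:ℝ) - 1 < q * Real.log q := by
      have h4 := mul_lt_mul_of_pos_left h2 hx0
      have h3 : (q:ℝ) * (1/(q:ℝ) - 1) = 1 - q := by field_simp
      nlinarith
    nlinarith [mul_le_mul_of_nonneg_left e1 (by linarith : (0:ℝ) ≤ (q:ℝ)-1),
      mul_lt_mul_of_pos_left e2 (sub_pos.2 hy)]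
  have hlog : Real.log ((p:ℝ) ^ (q-1)) < Real.log ((q:ℝ) ^ (p-1)) := by
    rw [Real.log_pow, Real.log_pow]
    have c1 : ((q-1 : ℕ) : ℝ) = (q:ℝ) - 1 := by
      push_cast [Nat.cast_sub (by omega : 1 ≤ q)]; ring
    have c2 : ((p-1 : ℕ) : ℝ) = (p:ℝ) - 1 := by
      push_cast [Nat.cast_sub (by omega : 1 ≤ p)]; ring
    rw [c1, c2]; exact hmain
  have hfin : ((p:ℝ)) ^ (q-1) < ((q:ℝ)) ^ (p-1) :=
    (Real.log_lt_log_iff (by positivity) (by positivity)).mp hlog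
  exact_mod_cast hfin

lemma aux_pow (A : ℕ) : ∀ M, 1 ≤ M → A^(M-1) * (A + M) ≤ (A+1)^M := by
  intro M
  induction M with
  | zero => omega
  | succ n ih =>
    intro _
    rcases Nat.eq_zero_or_pos n with h | h
    · subst h; simp
    · have hn : 1 ≤ n := h
      have ihn := ih hn
      have he : (A+1)^(n+1) = (A+1) * (A+1)^n := by ring
      rw [he]
      calc A^(n+1-1) * (A + (n+1)) = A^(n-1) * (A * (A + n + 1)) := by
            have h9 : n + 1 - 1 = (n-1) + 1 := by omega
            rw [h9, pow_succ]; ring_nf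
        _ ≤ A^(n-1) * ((A+1) * (A + n)) := by
            apply Nat.mul_le_mul_left
            nlinarith
        _ = (A+1) * (A^(n-1) * (A + n)) := by ring
        _ ≤ (A+1) * (A+1)^n := Nat.mul_le_mul_left _ ihn

lemma digits_pow_sub_one (p : ℕ) (hp : 1 < p) (M : ℕ) :
    Nat.digits p (p^M - 1) = List.replicate M (p-1) := by
  induction M with
  | zero => simp
  | succ n ih =>
    have hpos : 0 < p^(n+1) - 1 := by
      have h2 : 2 ≤ p^(n+1) := le_trans hp (Nat.le_self_pow (by omega) p)
      omega
    rw [Nat.digits_def' hp hpos]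
    have hdecomp : p^(n+1) - 1 = p * (p^n - 1) + (p - 1) := by
      have h1 : p^(n+1) = p * p^n := by ring
      have h2 : 1 ≤ p^n := Nat.one_le_pow _ _ (by omega)
      have h4 : p * p^n = p * (p^n - 1) + p := by
        rw [← Nat.mul_succ]
        congr 1
        omega
      omega
    have hmod : (p^(n+1) - 1) % p = p - 1 := by
      rw [hdecomp, Nat.mul_add_mod, Nat.mod_eq_of_lt (by omega)]
    have hdiv : (p^(n+1) - 1) / p = p^n - 1 := by
      rw [hdecomp, Nat.mul_add_div (by omega), Nat.div_eq_of_lt (by omega)]; omega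
    rw [hmod, hdiv, ih]
    rfl

lemma digSum_le_len (b n : ℕ) (hb : 1 < b) :
    digSum b n ≤ (Nat.digits b n).length * (b-1) := by
  unfold digSum
  calc (Nat.digits b n).sum ≤ (Nat.digits b n).length • (b-1) := by
        apply List.sum_le_card_nsmul
        intro x hx
        have := Nat.digits_lt_base hb hx
        omega
    _ = (Nat.digits b n).length * (b-1) := by simp

/-- Let `P` be a non-empty finite set of primes with largest element `p`,
and let `a > 0`, `k > 1` be integers.  Then there is a positive integer `a'`
with `max_{q ∈ P} s_q a' = s_p a'` whose base-`k` digit string (most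
significant digit first) has the digit string of `a` as a prefix. -/
theorem exists_extension_with_max_digit_sum (P : Finset ℕ) (hne : P.Nonempty)
    (hprime : ∀ q ∈ P, Nat.Prime q)
    (p : ℕ) (hpP : p ∈ P) (hpmax : ∀ q ∈ P, q ≤ p)
    (a k : ℕ) (ha : 0 < a) (hk : 1 < k) :
    ∃ a' : ℕ, 0 < a' ∧ P.sup (fun q => digSum q a') = digSum p a' ∧
      (Nat.digits k a).reverse <+: (Nat.digits k a').reverse := by
  have hp2 : 2 ≤ p := (hprime p hpP).two_le
  set C : ℕ := k * (a+1) * p with hC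
  have hC1 : 1 ≤ C :=
    Nat.mul_pos (Nat.mul_pos (by omega) (by omega)) (by omega)
  set M : ℕ := C^p * p^p with hM
  have hM1 : 1 ≤ M := Nat.mul_pos (pow_pos hC1 p) (pow_pos (by omega) p)
  set m : ℕ := Nat.log k (p^M) + 1 with hm
  have hpM1 : 1 ≤ p^M := Nat.one_le_pow _ _ (by omega)
  have hkm1 : p^M < k^m := Nat.lt_pow_succ_log_self hk _
  have hkm2 : k^m ≤ k * p^M := by
    rw [hm, pow_succ, mul_comm]
    exact Nat.mul_le_mul_left k (Nat.pow_log_le_self k (by omega))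
  set r : ℕ := p^M - 1 - (k^m * a % p^M) with hr
  set a' : ℕ := r + k^m * a with ha'
  clear_value a' r m M C
  have hrlt : r < p^M := by
    rw [hr]
    exact lt_of_le_of_lt (Nat.sub_le _ _) (Nat.sub_lt hpM1 one_pos)
  have hmod : a' % p^M = p^M - 1 := by
    have hmlt : k^m * a % p^M < p^M := Nat.mod_lt _ (by omega)
    have hsum : r + k^m * a % p^M = p^M - 1 := by
      rw [hr]
      exact Nat.sub_add_cancel (Nat.le_sub_one_of_lt hmlt)
    rw [ha']
    calc (r + k^m * a) % p^M = (r % p^M + k^m * a % p^M) % p^M := Nat.add_mod _ _ _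
      _ = (r + k^m * a % p^M) % p^M := by rw [Nat.mod_eq_of_lt hrlt]
      _ = p^M - 1 := by rw [hsum, Nat.mod_eq_of_lt (by omega)]
  have ha'pos : 0 < a' := by
    have : 0 < k^m * a := by positivity
    omega
  have ha'ge : p^M < a' := by
    have : k^m * 1 ≤ k^m * a := Nat.mul_le_mul_left _ ha
    omega
  have ha'lt : a' < k^m * (a+1) := by
    have : r < k^m := lt_trans hrlt hkm1
    have hexpand : k^m*(a+1) = k^m*a + k^m := by ring
    omega
  refine ⟨a', ha'pos, ?_, ?_⟩
  · -- sup equality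
    have hlow : M * (p-1) ≤ digSum p a' := by
      -- a' = (p^M - 1) + p^M * (a' / p^M)
      have hq0 : 0 < a' / p^M := Nat.div_pos (le_of_lt ha'ge) (by omega)
      have hlen : (Nat.digits p (p^M - 1)).length = M := by
        rw [digits_pow_sub_one p (by omega) M, List.length_replicate]
      have hdec : a' = (p^M - 1) + p^M * (a' / p^M) := by
        have := Nat.div_add_mod a' (p^M)
        omega
      have happ : Nat.digits p a' =
          Nat.digits p (p^M - 1) ++ Nat.digits p (a' / p^M) := by
        conv_lhs => rw [hdec]
        rw [Nat.digits_append_digits (by omega : 0 < p), hlen]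
      unfold digSum
      rw [happ, List.sum_append, digits_pow_sub_one p (by omega) M,
        List.sum_replicate, smul_eq_mul]
      omega
    have hbnd : ∀ q ∈ P, digSum q a' ≤ digSum p a' := by
      intro q hq
      rcases eq_or_lt_of_le (hpmax q hq) with h | hqlt
      · rw [h]
      have hq2 : 2 ≤ q := (hprime q hq).two_le
      -- s_q(a') ≤ (log_q a' + 1) * (q-1)
      have hlenq : (Nat.digits q a').length = Nat.log q a' + 1 :=
        Nat.digits_len q a' (by omega) (by omega)
      set L : ℕ := Nat.log q a' + 1 with hL
      have h1 : digSum q a' ≤ L * (q-1) := by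
        have := digSum_le_len q a' (by omega)
        rw [hlenq] at this
        exact this
      -- q^L ≤ C * p^M
      have hqL : q^L ≤ C * p^M := by
        have h2 : q^(L-1) ≤ a' := by
          simpa [hL] using Nat.pow_log_le_self q (show a' ≠ 0 by omega)
        have h3 : q^L = q * q^(L-1) := by
          rw [hL]; simp [pow_succ]; ring
        have h4 : q * a' ≤ q * (k^m * (a+1)) := Nat.mul_le_mul_left _ (le_of_lt ha'lt)
        have h5 : q * (k^m * (a+1)) ≤ q * (k * p^M * (a+1)) := by
          apply Nat.mul_le_mul_left
          exact Nat.mul_le_mul_right _ hkm2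
        have h6 : q * (k * p^M * (a+1)) ≤ C * p^M := by
          rw [hC]
          calc q * (k * p^M * (a+1)) = (k*(a+1)*q) * p^M := by ring
            _ ≤ (k*(a+1)*p) * p^M :=
              Nat.mul_le_mul_right _ (Nat.mul_le_mul_left _ (le_of_lt hqlt))
        calc q^L = q * q^(L-1) := h3
          _ ≤ q * a' := Nat.mul_le_mul_left _ h2
          _ ≤ C * p^M := le_trans h4 (le_trans h5 h6)
      -- key exponent inequality: (q-1)*L ≤ (p-1)*M
      have hexp : (q-1) * L ≤ (p-1) * M := by
        rw [← Nat.pow_le_pow_iff_right (show 1 < q by omega)]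
        have e1 : q^((q-1)*L) = (q^L)^(q-1) := by rw [← pow_mul, mul_comm]
        have e2 : (q^L)^(q-1) ≤ (C * p^M)^(q-1) := Nat.pow_le_pow_left hqL _
        have e3 : (C * p^M)^(q-1) = C^(q-1) * (p^(q-1))^M := by
          rw [mul_pow, ← pow_mul, ← pow_mul, mul_comm M (q-1)]
        set A : ℕ := p^(q-1) with hA
        have hA1 : 1 ≤ A := Nat.one_le_pow _ _ (by omega)
        have hAB : A + 1 ≤ q^(p-1) := key_pow_lt q p hq2 hqlt
        have hMC : C^(q-1) * A ≤ M := by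
          rw [hM, hA]
          have c1 : C^(q-1) ≤ C^p := Nat.pow_le_pow_right hC1 (by omega)
          have c2 : p^(q-1) ≤ p^p := Nat.pow_le_pow_right (by omega) (by omega)
          exact Nat.mul_le_mul c1 c2
        have e4 : C^(q-1) * A^M ≤ (A+1)^M := by
          calc C^(q-1) * A^M = A^(M-1) * (A * C^(q-1)) := by
                have : A^M = A^(M-1) * A := by
                  conv_lhs => rw [show M = (M-1)+1 by omega]
                  rw [pow_succ]
                rw [this]; ring
            _ ≤ A^(M-1) * (A + M) := by
                apply Nat.mul_le_mul_left
                have : A * C^(q-1) ≤ M := by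
                  rw [mul_comm]; exact hMC
                omega
            _ ≤ (A+1)^M := aux_pow A M hM1
        have e5 : (A+1)^M ≤ (q^(p-1))^M := Nat.pow_le_pow_left hAB M
        calc q^((q-1)*L) = (q^L)^(q-1) := e1
          _ ≤ C^(q-1) * A^M := by rw [← e3] at *; exact le_trans e2 (le_of_eq e3)
          _ ≤ (A+1)^M := e4
          _ ≤ (q^(p-1))^M := e5
          _ = q^((p-1)*M) := by rw [← pow_mul]
      calc digSum q a' ≤ L * (q-1) := h1
        _ = (q-1) * L := mul_comm _ _
        _ ≤ (p-1) * M := hexp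
        _ = M * (p-1) := mul_comm _ _
        _ ≤ digSum p a' := hlow
    exact le_antisymm (Finset.sup_le hbnd) (Finset.le_sup (f := fun q => digSum q a') hpP)
  · -- prefix
    have hrlen : (Nat.digits k r).length ≤ m := by
      rcases Nat.eq_zero_or_pos r with h | h
      · simp [h]
      · rw [Nat.digits_len k r hk (by omega)]
        have : Nat.log k r < m := Nat.log_lt_of_lt_pow (by omega) (lt_trans hrlt hkm1)
        omega
    have happ : Nat.digits k a' =
        Nat.digits k r ++ List.replicate (m - (Nat.digits k r).length) 0 ++
          Nat.digits k a := by
      have h := Nat.digits_append_zeroes_append_digits (b := k)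
        (k := m - (Nat.digits k r).length) (n := r) (m := a) hk ha
      rw [show (Nat.digits k r).length + (m - (Nat.digits k r).length) = m from by
        omega] at h
      rw [ha', ← h]
    rw [happ, List.reverse_append, List.reverse_append]
    exact ⟨_, rfl⟩
end

section
/- Let a, b, c be positive integers with b, c ≥ 2 such that ln(b)/ln(c) is irrational. Then there exist infinitely many triples of non-negative integers (d, e, f) with 1 ≤ f < b^e such that c^d = a·b^e + f. Equivalently, there are infinitely many powers of c whose base-b representation begins with the base-b digit string of a. -/
lemma step_hits (g len u R : ℝ) (hg : 0 < g) (hgl : g < len) :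
    ∃ (k : ℕ) (F : ℤ), R < (k : ℝ) ∧ u + F < k * g ∧ (k : ℝ) * g < u + len + F := by
  obtain ⟨F, hF⟩ := exists_int_gt (max 0 (R * g) - u)
  have hFu : max 0 (R * g) < u + F := by linarith
  set x := (u + F) / g with hx
  have hx0 : 0 ≤ x := by
    apply div_nonneg _ hg.le
    have : (0:ℝ) ≤ max 0 (R * g) := le_max_left _ _
    linarith
  have h1 : x < (⌊x⌋₊ : ℝ) + 1 := Nat.lt_floor_add_one x
  have h2 : (⌊x⌋₊ : ℝ) ≤ x := Nat.floor_le hx0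
  have hxg : x * g = u + F := div_mul_cancel₀ _ hg.ne'
  have hlow : u + F < ((⌊x⌋₊ : ℝ) + 1) * g := by nlinarith
  have hhigh : ((⌊x⌋₊ : ℝ) + 1) * g ≤ (x + 1) * g := by nlinarith
  refine ⟨⌊x⌋₊ + 1, F, ?_, ?_, ?_⟩
  · have h3 : R * g < ((⌊x⌋₊ : ℝ) + 1) * g :=
      lt_of_le_of_lt (le_max_right 0 (R*g)) (lt_trans hFu hlow)
    have hR : R < (⌊x⌋₊ : ℝ) + 1 := lt_of_mul_lt_mul_right h3 hg.le
    push_cast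
    linarith
  · push_cast; linarith
  · push_cast; nlinarith

lemma exists_small_comb (θ : ℝ) (hθ : Irrational θ) (ε : ℝ) (hε : 0 < ε) (hε1 : ε ≤ 1) :
    ∃ m n : ℤ, n ≠ 0 ∧ 0 < (m:ℝ) + n * θ ∧ (m:ℝ) + n * θ < ε := by
  set G := AddSubgroup.closure ({1, θ} : Set ℝ) with hG
  have hd : Dense (G : Set ℝ) := by
    rcases G.dense_or_cyclic with h | ⟨x, hx⟩
    · exact h
    · exfalso
      have h1 : (1:ℝ) ∈ G := AddSubgroup.subset_closure (by simp)
      have hθG : θ ∈ G := AddSubgroup.subset_closure (by simp)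
      rw [hx, AddSubgroup.mem_closure_singleton] at h1 hθG
      obtain ⟨m, hm⟩ := h1
      obtain ⟨n, hn⟩ := hθG
      rw [zsmul_eq_mul] at hm hn
      have hm0 : (m:ℝ) ≠ 0 := by
        rintro h; rw [h, zero_mul] at hm; exact one_ne_zero hm.symm
      have hmz : m ≠ 0 := by exact_mod_cast hm0
      have hxval : x = 1 / m := by field_simp; linarith [hm]
      have : θ = (n:ℝ) / m := by rw [← hn, hxval]; ring
      exact hθ ⟨(n:ℚ)/(m:ℚ), by push_cast; rw [this]⟩
  have hne : (Set.Ioo (0:ℝ) ε).Nonempty := ⟨ε/2, by constructor <;> linarith⟩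
  obtain ⟨x, hxG, hx⟩ := hd.exists_mem_open isOpen_Ioo hne
  rw [SetLike.mem_coe, AddSubgroup.mem_closure_pair] at hxG
  obtain ⟨m, n, hmn⟩ := hxG
  rw [zsmul_eq_mul, zsmul_eq_mul, mul_one] at hmn
  refine ⟨m, n, ?_, by rw [hmn]; exact hx.1, by rw [hmn]; exact hx.2⟩
  rintro rfl
  rw [Int.cast_zero, zero_mul, add_zero] at hmn
  have h0 : (0:ℝ) < m := hmn ▸ hx.1
  have h1 : (m:ℝ) < 1 := lt_of_lt_of_le (hmn ▸ hx.2) hε1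
  have : (0:ℤ) < m := by exact_mod_cast h0
  have : m < 1 := by exact_mod_cast h1
  omega

lemma main_exists (a b c : ℕ) (ha : 0 < a) (hb : 2 ≤ b) (hc : 2 ≤ c)
    (hirr : Irrational (Real.log b / Real.log c)) (N : ℕ) :
    ∃ d e f : ℕ, N < d ∧ 1 ≤ f ∧ f < b ^ e ∧ c ^ d = a * b ^ e + f := by
  have hb1 : (1:ℝ) < b := by
    have : 1 < b := by omega
    exact_mod_cast this
  have hc1 : (1:ℝ) < c := by
    have : 1 < c := by omega
    exact_mod_cast this
  have ha1 : (1:ℝ) ≤ a := by exact_mod_cast ha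
  have hlb : 0 < Real.log b := Real.log_pos hb1
  have hlc : 0 < Real.log c := Real.log_pos hc1
  set θ : ℝ := Real.log c / Real.log b with hθdef
  have hθ : Irrational θ := by
    have h : θ = (Real.log b / Real.log c)⁻¹ := by rw [inv_div]
    rw [h]
    exact irrational_inv_iff.mpr hirr
  have hθpos : 0 < θ := div_pos hlc hlb
  set α : ℝ := Real.log a / Real.log b with hαdef
  set α' : ℝ := Real.log (a + 1) / Real.log b with hα'def
  have hα0 : 0 ≤ α := div_nonneg (Real.log_nonneg ha1) hlb.le
  have hL : 0 < α' - α := by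
    have h1 : Real.log a < Real.log (a + 1) := Real.log_lt_log (by linarith) (by linarith)
    have h2 : Real.log a / Real.log b < Real.log ((a:ℝ)+1) / Real.log b :=
      div_lt_div_of_pos_right h1 hlb
    rw [hαdef, hα'def]
    linarith
  set ε : ℝ := min (α' - α) 1 with hεdef
  have hε : 0 < ε := lt_min hL one_pos
  have hε1 : ε ≤ 1 := min_le_right _ _
  obtain ⟨m, n, hn0, hg0, hgε⟩ := exists_small_comb θ hθ ε hε hε1
  set g : ℝ := (m:ℝ) + n * θ with hgdef
  have hgL : g < α' - α := lt_of_lt_of_le hgε (min_le_left _ _)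
  set R : ℝ := max (N:ℝ) (α' / θ) with hRdef
  have key : ∃ (d : ℕ) (E : ℤ), R < (d:ℝ) ∧ α + E < d * θ ∧ (d:ℝ) * θ < α' + E := by
    rcases lt_or_gt_of_ne hn0 with hneg | hpos
    · obtain ⟨k, F, hkR, hk1, hk2⟩ := step_hits g (α' - α) (-α') R hg0 hgL
      have hnn : (((-n).toNat : ℕ) : ℝ) = -(n:ℝ) := by
        exact_mod_cast Int.toNat_of_nonneg (by omega : (0:ℤ) ≤ -n)
      have hd : ((k * (-n).toNat : ℕ) : ℝ) = (k:ℝ) * (-(n:ℝ)) := by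
        push_cast [hnn]; ring
      have hdθ : ((k * (-n).toNat : ℕ) : ℝ) * θ = (k:ℝ) * m - (k:ℝ) * g := by
        rw [hd, hgdef]; ring
      refine ⟨k * (-n).toNat, (k:ℤ) * m - F, ?_, ?_, ?_⟩
      · rw [hd]
        have hn1 : (1:ℝ) ≤ -(n:ℝ) := by exact_mod_cast (by omega : (1:ℤ) ≤ -n)
        have hkpos : (0:ℝ) ≤ k := by positivity
        nlinarith
      · rw [hdθ]; push_cast; linarith
      · rw [hdθ]; push_cast; linarith
    · obtain ⟨k, F, hkR, hk1, hk2⟩ := step_hits g (α' - α) α R hg0 hgL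
      have hnn : ((n.toNat : ℕ) : ℝ) = (n:ℝ) := by
        exact_mod_cast Int.toNat_of_nonneg (by omega : (0:ℤ) ≤ n)
      have hd : ((k * n.toNat : ℕ) : ℝ) = (k:ℝ) * (n:ℝ) := by
        push_cast [hnn]; ring
      have hdθ : ((k * n.toNat : ℕ) : ℝ) * θ = (k:ℝ) * g - (k:ℝ) * m := by
        rw [hd, hgdef]; ring
      refine ⟨k * n.toNat, F - (k:ℤ) * m, ?_, ?_, ?_⟩
      · rw [hd]
        have hn1 : (1:ℝ) ≤ (n:ℝ) := by exact_mod_cast (by omega : (1:ℤ) ≤ n)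
        have hkpos : (0:ℝ) ≤ k := by positivity
        nlinarith
      · rw [hdθ]; push_cast; linarith
      · rw [hdθ]; push_cast; linarith
  obtain ⟨d, E, hdR, hd1, hd2⟩ := key
  have hdN : N < d := by
    have : (N:ℝ) < d := lt_of_le_of_lt (le_max_left _ _) hdR
    exact_mod_cast this
  have hdθ : α' < d * θ := by
    have h1 : α' / θ < d := lt_of_le_of_lt (le_max_right _ _) hdR
    calc α' = α' / θ * θ := by field_simp
      _ < d * θ := mul_lt_mul_of_pos_right h1 hθpos
  have hE0 : 0 < E := by
    have : (0:ℝ) < E := by linarith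
    exact_mod_cast this
  set e : ℕ := E.toNat with hedef
  have he : (e:ℝ) = (E:ℝ) := by
    rw [hedef]; exact_mod_cast Int.toNat_of_nonneg hE0.le
  rw [← he] at hd1 hd2
  have hbpow : (0:ℝ) < (b:ℝ) ^ e := by positivity
  have habe : (0:ℝ) < (a:ℝ) * (b:ℝ) ^ e := by positivity
  have hcd : (0:ℝ) < (c:ℝ) ^ d := by positivity
  have hlog1 : Real.log ((a:ℝ) * (b:ℝ) ^ e) < Real.log ((c:ℝ) ^ d) := by
    rw [Real.log_mul (by linarith) (ne_of_gt hbpow), Real.log_pow, Real.log_pow]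
    have h := mul_lt_mul_of_pos_right hd1 hlb
    rw [add_mul, hαdef, div_mul_cancel₀ _ hlb.ne'] at h
    calc Real.log a + (e:ℕ) * Real.log b = Real.log a + (e:ℝ) * Real.log b := by norm_num
      _ < (d:ℝ) * θ * Real.log b := h
      _ = (d:ℕ) * Real.log c := by rw [hθdef]; field_simp
  have hlog2 : Real.log ((c:ℝ) ^ d) < Real.log (((a:ℝ) + 1) * (b:ℝ) ^ e) := by
    rw [Real.log_mul (by linarith) (ne_of_gt hbpow), Real.log_pow, Real.log_pow]
    have h := mul_lt_mul_of_pos_right hd2 hlb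
    rw [add_mul, hα'def, div_mul_cancel₀ _ hlb.ne'] at h
    calc ((d:ℕ):ℝ) * Real.log c = (d:ℝ) * θ * Real.log b := by rw [hθdef]; field_simp
      _ < Real.log ((a:ℝ)+1) + (e:ℝ) * Real.log b := h
      _ = Real.log ((a:ℝ)+1) + (e:ℕ) * Real.log b := by norm_num
  have hlt1 : (a:ℝ) * (b:ℝ) ^ e < (c:ℝ) ^ d :=
    (Real.log_lt_log_iff habe hcd).mp hlog1
  have hlt2 : (c:ℝ) ^ d < ((a:ℝ) + 1) * (b:ℝ) ^ e :=
    (Real.log_lt_log_iff hcd (by positivity)).mp hlog2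
  have hn1 : a * b ^ e < c ^ d := by exact_mod_cast hlt1
  have hn2 : c ^ d < (a + 1) * b ^ e := by exact_mod_cast hlt2
  have hsplit : (a+1) * b ^ e = a * b ^ e + b ^ e := by ring
  refine ⟨d, e, c ^ d - a * b ^ e, hdN, by omega, by omega, by omega⟩

/-- If `a, b, c` are positive integers with `b, c ≥ 2` and `ln b / ln c`
irrational, then there are infinitely many triples `(d, e, f)` of natural
numbers with `1 ≤ f < b ^ e` and `c ^ d = a * b ^ e + f`; i.e. infinitely
many powers of `c` whose base-`b` representation starts with the digit
string of `a`. -/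
theorem infinitely_many_powers_with_prefix (a b c : ℕ)
    (ha : 0 < a) (hb : 2 ≤ b) (hc : 2 ≤ c)
    (hirr : Irrational (Real.log b / Real.log c)) :
    {t : ℕ × ℕ × ℕ |
      1 ≤ t.2.2 ∧ t.2.2 < b ^ t.2.1 ∧ c ^ t.1 = a * b ^ t.2.1 + t.2.2}.Infinite := by
  apply Set.Infinite.of_image Prod.fst
  apply Set.infinite_of_not_bddAbove
  rw [not_bddAbove_iff]
  intro N
  obtain ⟨d, e, f, hN, h1, h2, h3⟩ := main_exists a b c ha hb hc hirr N
  exact ⟨d, ⟨(d, e, f), ⟨h1, h2, h3⟩, rfl⟩, hN⟩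
end
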